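/- arXiv:2512.22561 — 11 statements merged into one kernel-verified Lean document; each statement's English description precedes it below -/
import Mathlib

section
/- Let X be a set, Y a locally convex Hausdorff real topological vector space with topological dual Y*, and G : X × Y → ℝ ∪ {±∞}. Define 𝒢 = {(y,r) ∈ Y × ℝ : ∃ x ∈ X, G(x,y) ≤ r}. Then the following are equivalent: (i) there exists λ ∈ Y* such that G(x,y) + ⟨λ,y⟩ ≥ 0 for all (x,y) ∈ X × Y; (ii) (0,-1) does not belong to the closed convex hull of ℝ₊ · 𝒢. -/
/-- Lemma 2.2: dual characterization via separation. -/
theorem stmt_1 {X : Type*} {Y : Type*} [AddCommGroup Y] [Module ℝ Y]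
    [TopologicalSpace Y] [IsTopologicalAddGroup Y] [ContinuousSMul ℝ Y]
    [LocallyConvexSpace ℝ Y] [T2Space Y]
    (G : X → Y → EReal) :
    (∃ lam : Y →L[ℝ] ℝ, ∀ (x : X) (y : Y), 0 ≤ G x y + ((lam y : ℝ) : EReal)) ↔
      ((0 : Y), (-1 : ℝ)) ∉
        closure (convexHull ℝ
          {z : Y × ℝ | ∃ t ∈ Set.Ici (0 : ℝ),
            ∃ s ∈ {p : Y × ℝ | ∃ x : X, G x p.1 ≤ (p.2 : EReal)}, z = t • s}) := by
  set Gset : Set (Y × ℝ) := {p : Y × ℝ | ∃ x : X, G x p.1 ≤ (p.2 : EReal)} with hGset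
  set S : Set (Y × ℝ) := {z : Y × ℝ | ∃ t ∈ Set.Ici (0 : ℝ), ∃ s ∈ Gset, z = t • s} with hS
  constructor
  · rintro ⟨lam, h⟩ hmem
    set Φ : (Y × ℝ) →L[ℝ] ℝ :=
      (lam.comp (ContinuousLinearMap.fst ℝ Y ℝ)) + ContinuousLinearMap.snd ℝ Y ℝ with hΦ
    have hSsub : S ⊆ {z : Y × ℝ | 0 ≤ Φ z} := by
      rintro z ⟨t, ht, ⟨y, r⟩, ⟨x, hx⟩, rfl⟩
      have h1 : (0 : EReal) ≤ (r : EReal) + ((lam y : ℝ) : EReal) :=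
        le_trans (h x y) (add_le_add_left hx _)
      have h2 : (0 : ℝ) ≤ r + lam y := by exact_mod_cast h1
      have h3 : Φ (t • (y, r)) = t * (lam y + r) := by
        rw [map_smul]; simp [hΦ]
      simp only [Set.mem_setOf_eq, h3]
      exact mul_nonneg ht (by linarith)
    have hconv : Convex ℝ {z : Y × ℝ | 0 ≤ Φ z} :=
      (convex_Ici (0 : ℝ)).linear_preimage (Φ : (Y × ℝ) →ₗ[ℝ] ℝ)
    have hclosed : IsClosed {z : Y × ℝ | 0 ≤ Φ z} :=
      isClosed_Ici.preimage Φ.continuous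
    have := closure_minimal (convexHull_min hSsub hconv) hclosed hmem
    simp only [Set.mem_setOf_eq, hΦ] at this
    simp at this
    linarith
  · intro hmem
    by_cases hE : Gset.Nonempty
    · obtain ⟨s₀, hs₀⟩ := hE
      have h0S : (0 : Y × ℝ) ∈ S := ⟨0, by norm_num, s₀, hs₀, by simp⟩
      have h0C : (0 : Y × ℝ) ∈ closure (convexHull ℝ S) :=
        subset_closure (subset_convexHull ℝ S h0S)
      obtain ⟨f, u, hfu, hu⟩ := geometric_hahn_banach_closed_point
        ((convex_convexHull ℝ S).closure) isClosed_closure hmem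
      have hu0 : 0 < u := by have := hfu _ h0C; simpa using this
      set c : ℝ := f (0, 1) with hc
      have hcneg : c < 0 := by
        have : f ((0 : Y), (-1 : ℝ)) = -c := by
          rw [hc, ← map_neg]; norm_num
        rw [this] at hu; linarith
      -- f ≤ 0 on Gset
      have hfG : ∀ p ∈ Gset, f p ≤ 0 := by
        intro p hp
        by_contra hpos
        push_neg at hpos
        have ht : (0 : ℝ) ≤ u / f p := le_of_lt (div_pos hu0 hpos)
        have hmemS : (u / f p) • p ∈ S := ⟨u / f p, ht, p, hp, rfl⟩
        have := hfu _ (subset_closure (subset_convexHull ℝ S hmemS))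
        rw [map_smul, smul_eq_mul, div_mul_cancel₀ _ (ne_of_gt hpos)] at this
        exact lt_irrefl u this
      have hdecomp : ∀ (y : Y) (r : ℝ), f (y, r) = f (y, 0) + r * c := by
        intro y r
        have : (y, r) = (y, (0 : ℝ)) + r • ((0 : Y), (1 : ℝ)) := by
          simp [Prod.ext_iff]
        rw [this, map_add, map_smul, smul_eq_mul, hc]
      refine ⟨c⁻¹ • (f.comp (ContinuousLinearMap.inl ℝ Y ℝ)), fun x y => ?_⟩
      set L : ℝ := c⁻¹ * f (y, 0) with hL
      have key : ∀ r : ℝ, G x y ≤ (r : EReal) → -L ≤ r := by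
        intro r hr
        have h1 : f (y, 0) + r * c ≤ 0 := by
          have := hfG (y, r) ⟨x, hr⟩
          rwa [hdecomp] at this
        have hf : c * L = f (y, 0) := by rw [hL, mul_inv_cancel_left₀ hcneg.ne]
        have h3 : c * (L + r) ≤ 0 := by rw [mul_add, hf]; linarith
        by_contra hlt
        push_neg at hlt
        have : 0 < c * (L + r) := mul_pos_of_neg_of_neg hcneg (by linarith)
        linarith
      show (0 : EReal) ≤ G x y + ((c⁻¹ • (f.comp (ContinuousLinearMap.inl ℝ Y ℝ))) y : ℝ)
      have hLeq : ((c⁻¹ • (f.comp (ContinuousLinearMap.inl ℝ Y ℝ))) y : ℝ) = L := by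
        simp [hL, ContinuousLinearMap.smul_apply]
      rw [hLeq]
      rcases eq_top_or_lt_top (G x y) with hT | hT
      · rw [hT]; simp
      · rcases eq_bot_or_bot_lt (G x y) with hB | hB
        · exfalso
          have h1 := key (-L - 1) (by rw [hB]; exact bot_le)
          linarith
        · lift G x y to ℝ using ⟨hT.ne, hB.ne'⟩ with v hv
          have := key v le_rfl
          have : (0 : ℝ) ≤ v + L := by linarith
          exact_mod_cast this
    · refine ⟨0, fun x y => ?_⟩
      have hT : G x y = ⊤ := by
        by_contra hne
        rcases eq_bot_or_bot_lt (G x y) with hB | hB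
        · exact hE ⟨(y, 0), x, by rw [hB]; exact bot_le⟩
        · exact hE ⟨(y, (G x y).toReal), x,
            le_of_eq (EReal.coe_toReal hne hB.ne').symm⟩
      rw [hT]; simp
end

section
/- Let X be a set, Y a locally convex Hausdorff real topological vector space with dual Y*, and F : X × Y → ℝ ∪ {±∞}. Let ℱ = {(y,r) ∈ Y × ℝ : ∃ x ∈ X, F(x,y) ≤ r}. Then the following are equivalent: (i) the implication [∀ x ∈ X, F(x,0) ≥ 0] ⟹ [∃ λ̄ ∈ Y* with F(x,y) + ⟨λ̄,y⟩ ≥ 0 for all (x,y)] holds; (ii) ℝ₊ · ℱ is closed convex regarding {(0,-1)}, i.e. (cl co(ℝ₊ · ℱ)) ∩ {(0,-1)} = (ℝ₊ · ℱ) ∩ {(0,-1)}. -/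
/-- Corollary 2.1: the `S_F`-procedure is valid iff `ℝ₊ · ℱ` is closed convex
regarding `{(0, -1)}`. -/
theorem stmt_4 {X : Type*} {Y : Type*} [AddCommGroup Y] [Module ℝ Y]
    [TopologicalSpace Y] [IsTopologicalAddGroup Y] [ContinuousSMul ℝ Y]
    [LocallyConvexSpace ℝ Y] [T2Space Y]
    (F : X → Y → EReal) :
    ((∀ x : X, 0 ≤ F x 0) →
        ∃ lam : Y →L[ℝ] ℝ, ∀ (x : X) (y : Y), 0 ≤ F x y + ((lam y : ℝ) : EReal)) ↔
      closure (convexHull ℝ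
          {z : Y × ℝ | ∃ t ∈ Set.Ici (0 : ℝ),
            ∃ s ∈ {p : Y × ℝ | ∃ x : X, F x p.1 ≤ (p.2 : EReal)}, z = t • s}) ∩
          {((0 : Y), (-1 : ℝ))} =
        {z : Y × ℝ | ∃ t ∈ Set.Ici (0 : ℝ),
            ∃ s ∈ {p : Y × ℝ | ∃ x : X, F x p.1 ≤ (p.2 : EReal)}, z = t • s} ∩
          {((0 : Y), (-1 : ℝ))} := by
  set Fs : Set (Y × ℝ) := {p : Y × ℝ | ∃ x : X, F x p.1 ≤ (p.2 : EReal)} with hFs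
  set K : Set (Y × ℝ) := {z : Y × ℝ | ∃ t ∈ Set.Ici (0 : ℝ), ∃ s ∈ Fs, z = t • s} with hK
  -- key fact: under the premise of (i), (0,-1) ∉ K
  have hnotK : (∀ x : X, 0 ≤ F x 0) → ((0 : Y), (-1 : ℝ)) ∉ K := by
    intro hP hmem
    obtain ⟨t, ht, ⟨y, r⟩, ⟨x, hxr⟩, heq⟩ := hmem
    have h2 : t * r = -1 := (congrArg Prod.snd heq).symm
    have h1 : t • y = (0 : Y) := (congrArg Prod.fst heq).symm
    have htpos : 0 < t := by
      rcases lt_or_eq_of_le (Set.mem_Ici.mp ht) with h | h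
      · exact h
      · exfalso; rw [← h] at h2; simp at h2
    have hy0 : y = 0 := by
      have := congrArg (fun v => t⁻¹ • v) h1
      simpa [smul_smul, inv_mul_cancel₀ htpos.ne'] using this
    have hrneg : r < 0 := by nlinarith
    have := (hP x).trans (hy0 ▸ hxr)
    have : ((0 : ℝ) : EReal) ≤ (r : EReal) := this
    rw [EReal.coe_le_coe_iff] at this
    linarith
  constructor
  · -- (i) → (ii)
    intro hi
    apply Set.ext
    intro z
    simp only [Set.mem_inter_iff, Set.mem_singleton_iff]
    constructor
    · rintro ⟨hz, rfl⟩
      refine ⟨?_, rfl⟩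
      by_cases hP : ∀ x : X, 0 ≤ F x 0
      · exfalso
        obtain ⟨lam, hlam⟩ := hi hP
        set f : Y × ℝ →L[ℝ] ℝ :=
          lam.comp (ContinuousLinearMap.fst ℝ Y ℝ) + ContinuousLinearMap.snd ℝ Y ℝ with hf
        have hfval : ∀ p : Y × ℝ, f p = lam p.1 + p.2 := fun p => rfl
        have hKnn : ∀ w ∈ K, 0 ≤ f w := by
          rintro w ⟨t, ht, ⟨y, r⟩, ⟨x, hxr⟩, rfl⟩
          have h1 : (0 : EReal) ≤ F x y + ((lam y : ℝ) : EReal) := hlam x y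
          have h2 : F x y + ((lam y : ℝ) : EReal) ≤ (r : EReal) + ((lam y : ℝ) : EReal) :=
            add_le_add_left hxr _
          have h3 : (0 : EReal) ≤ ((r + lam y : ℝ) : EReal) := by
            rw [EReal.coe_add]; exact h1.trans h2
          rw [EReal.coe_nonneg] at h3
          rw [f.map_smul, smul_eq_mul, hfval]
          exact mul_nonneg (Set.mem_Ici.mp ht) (by simp only []; linarith)
        have hconv : Convex ℝ {w : Y × ℝ | 0 ≤ f w} :=
          convex_halfSpace_ge (f.toLinearMap.isLinear) 0
        have hclosed : IsClosed {w : Y × ℝ | 0 ≤ f w} :=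
          isClosed_le continuous_const f.continuous
        have hcl : closure (convexHull ℝ K) ⊆ {w : Y × ℝ | 0 ≤ f w} :=
          closure_minimal (convexHull_min hKnn hconv) hclosed
        have := hcl hz
        rw [Set.mem_setOf_eq, hfval] at this
        simp at this
        linarith
      · push_neg at hP
        obtain ⟨x, hx⟩ := hP
        have hlt : F x 0 < ((0 : ℝ) : EReal) := by
          simpa using hx
        obtain ⟨r, hr1, hr2⟩ := EReal.lt_iff_exists_real_btwn.mp hlt
        rw [EReal.coe_lt_coe_iff] at hr2
        refine ⟨-r⁻¹, Set.mem_Ici.mpr (neg_nonneg.mpr (inv_nonpos.mpr hr2.le)), ((0 : Y), r),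
          ⟨x, hr1.le⟩, ?_⟩
        have h5 : (-r⁻¹) • ((0 : Y), r) = ((0 : Y), (-1 : ℝ)) := by
          rw [Prod.smul_mk]
          simp [smul_eq_mul, neg_mul, inv_mul_cancel₀ hr2.ne]
        exact h5.symm
    · rintro ⟨hz, rfl⟩
      exact ⟨subset_closure (subset_convexHull ℝ _ hz), rfl⟩
  · -- (ii) → (i)
    intro hii hP
    by_cases hne : Fs.Nonempty
    · obtain ⟨p0, hp0⟩ := hne
      have h0K : (0 : Y × ℝ) ∈ K := ⟨0, Set.mem_Ici.mpr le_rfl, p0, hp0, by simp⟩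
      have hnotcl : ((0 : Y), (-1 : ℝ)) ∉ closure (convexHull ℝ K) := by
        intro hmem
        have : ((0 : Y), (-1 : ℝ)) ∈ K ∩ {((0 : Y), (-1 : ℝ))} := by
          rw [← hii]; exact ⟨hmem, rfl⟩
        exact hnotK hP this.1
      obtain ⟨f, u, hfu, hsep⟩ :=
        geometric_hahn_banach_point_closed ((convex_convexHull ℝ K).closure)
          isClosed_closure hnotcl
      have hKsub : K ⊆ closure (convexHull ℝ K) :=
        (subset_convexHull ℝ K).trans subset_closure
      have hu0 : u < 0 := by
        have := hsep 0 (hKsub h0K)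
        simpa using this
      -- β := f (0, 1) > 0
      set β : ℝ := f ((0 : Y), (1 : ℝ)) with hβdef
      have hfneg : f ((0 : Y), (-1 : ℝ)) = -β := by
        have : ((0 : Y), (-1 : ℝ)) = (-1 : ℝ) • ((0 : Y), (1 : ℝ)) := by simp
        rw [this, f.map_smul]; simp [hβdef]
      have hβpos : 0 < β := by
        rw [hfneg] at hfu; linarith
      -- on Fs, f ≥ 0
      have hFsnn : ∀ p ∈ Fs, 0 ≤ f p := by
        intro p hp
        by_contra h
        push_neg at h
        have ht : 0 < 2 * u / f p := by
          apply div_pos_of_neg_of_neg (by linarith) h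
        have hmem : (2 * u / f p) • p ∈ K :=
          ⟨2 * u / f p, Set.mem_Ici.mpr ht.le, p, hp, rfl⟩
        have := hsep _ (hKsub hmem)
        rw [f.map_smul, smul_eq_mul] at this
        rw [div_mul_cancel₀ _ h.ne] at this
        linarith
      -- decomposition of f
      have hdecomp : ∀ (y : Y) (r : ℝ), f (y, r) = f (y, 0) + r * β := by
        intro y r
        have : (y, r) = ((y, (0:ℝ)) + r • ((0 : Y), (1 : ℝ))) := by
          ext <;> simp
        rw [this, f.map_add, f.map_smul, smul_eq_mul, hβdef]
      refine ⟨β⁻¹ • f.comp (ContinuousLinearMap.inl ℝ Y ℝ), fun x y => ?_⟩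
      have hlamval : (β⁻¹ • f.comp (ContinuousLinearMap.inl ℝ Y ℝ)) y = β⁻¹ * f (y, 0) := rfl
      rw [hlamval]
      -- key numeric fact: F x y ≤ r implies 0 ≤ f (y,0) + r * β
      have hkey : ∀ r : ℝ, F x y ≤ (r : EReal) → 0 ≤ f (y, 0) + r * β := by
        intro r hr
        have := hFsnn (y, r) ⟨x, hr⟩
        rwa [hdecomp] at this
      rcases eq_top_or_lt_top (F x y) with htop | htop
      · rw [htop, EReal.top_add_coe]; exact le_top
      rcases eq_bot_or_bot_lt (F x y) with hbot | hbot
      · exfalso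
        have := hkey (-(f (y, 0) + 1) / β) (by rw [hbot]; exact bot_le)
        rw [div_mul_cancel₀ _ hβpos.ne'] at this
        linarith
      · set a : ℝ := (F x y).toReal with ha
        have hFa : F x y = (a : EReal) := (EReal.coe_toReal htop.ne hbot.ne').symm
        have h1 : 0 ≤ f (y, 0) + a * β := hkey a hFa.le
        have h2 : (0:ℝ) ≤ a + β⁻¹ * f (y, 0) := by
          have := mul_nonneg (inv_nonneg.mpr hβpos.le) h1
          rw [mul_add, mul_comm a β, ← mul_assoc, inv_mul_cancel₀ hβpos.ne', one_mul] at this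
          linarith
        rw [hFa, ← EReal.coe_add, EReal.coe_nonneg]
        exact h2
    · -- Fs empty: F is identically ⊤
      refine ⟨0, fun x y => ?_⟩
      have : F x y = ⊤ := by
        rw [EReal.eq_top_iff_forall_lt]
        intro r
        by_contra h
        push_neg at h
        exact hne ⟨(y, r), ⟨x, h⟩⟩
      rw [this]
      simp [EReal.top_add_coe]
end

section
/- Let X be a set, Y a locally convex Hausdorff real topological vector space, and F : X × Y → ℝ ∪ {±∞} such that the closure of ℝ₊ · ℱ is convex, where ℱ = {(y,r) : ∃ x, F(x,y) ≤ r}. Then the S_F-procedure is valid if and only if ℝ₊ · ℱ is closed regarding {(0,-1)}, i.e. cl(ℝ₊ · ℱ) ∩ {(0,-1)} = (ℝ₊ · ℱ) ∩ {(0,-1)}. -/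
open Set

lemma ereal_exists_real_le {a : EReal} {c : ℝ} (h : a < (c : EReal)) :
    ∃ r : ℝ, a ≤ (r : EReal) ∧ r < c := by
  obtain ⟨b, hb1, hb2⟩ := exists_between h
  lift b to ℝ using ⟨(hb2.trans (EReal.coe_lt_top c)).ne, (bot_le.trans_lt hb1).ne'⟩
  exact ⟨b, hb1.le, by exact_mod_cast hb2⟩

/-- Corollary 2.2: if the closure of `ℝ₊ · ℱ` is convex, the `S_F`-procedure is
valid iff `ℝ₊ · ℱ` is closed regarding `{(0, -1)}`. -/
theorem stmt_5 {X : Type*} {Y : Type*} [AddCommGroup Y] [Module ℝ Y]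
    [TopologicalSpace Y] [IsTopologicalAddGroup Y] [ContinuousSMul ℝ Y]
    [LocallyConvexSpace ℝ Y] [T2Space Y]
    (F : X → Y → EReal)
    (hconv : Convex ℝ (closure
      {z : Y × ℝ | ∃ t ∈ Set.Ici (0 : ℝ),
        ∃ s ∈ {p : Y × ℝ | ∃ x : X, F x p.1 ≤ (p.2 : EReal)}, z = t • s})) :
    ((∀ x : X, 0 ≤ F x 0) →
        ∃ lam : Y →L[ℝ] ℝ, ∀ (x : X) (y : Y), 0 ≤ F x y + ((lam y : ℝ) : EReal)) ↔
      closure {z : Y × ℝ | ∃ t ∈ Set.Ici (0 : ℝ),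
            ∃ s ∈ {p : Y × ℝ | ∃ x : X, F x p.1 ≤ (p.2 : EReal)}, z = t • s} ∩
          {((0 : Y), (-1 : ℝ))} =
        {z : Y × ℝ | ∃ t ∈ Set.Ici (0 : ℝ),
            ∃ s ∈ {p : Y × ℝ | ∃ x : X, F x p.1 ≤ (p.2 : EReal)}, z = t • s} ∩
          {((0 : Y), (-1 : ℝ))} := by
  set ℱ : Set (Y × ℝ) := {p : Y × ℝ | ∃ x : X, F x p.1 ≤ (p.2 : EReal)} with hF
  set C : Set (Y × ℝ) := {z : Y × ℝ | ∃ t ∈ Set.Ici (0 : ℝ), ∃ s ∈ ℱ, z = t • s} with hC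
  constructor
  · -- validity → closedness regarding {(0,-1)}
    intro hvalid
    refine Set.Subset.antisymm ?_ (Set.inter_subset_inter_left _ subset_closure)
    rintro z ⟨hzcl, hz⟩
    simp only [Set.mem_singleton_iff] at hz
    subst hz
    refine ⟨?_, rfl⟩
    by_cases hA : ∀ x : X, 0 ≤ F x 0
    · obtain ⟨lam, hlam⟩ := hvalid hA
      exfalso
      have hsub : C ⊆ {z : Y × ℝ | 0 ≤ lam z.1 + z.2} := by
        rintro z ⟨t, ht, ⟨y, r⟩, ⟨x, hxr⟩, rfl⟩
        have ht' : (0:ℝ) ≤ t := ht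
        have h1 : (0 : EReal) ≤ (r : EReal) + ((lam y : ℝ) : EReal) :=
          le_trans (hlam x y) (add_le_add_left hxr _)
        have h2 : (0 : ℝ) ≤ r + lam y := by exact_mod_cast h1
        simp only [Set.mem_setOf_eq, Prod.smul_fst, Prod.smul_snd, smul_eq_mul, map_smul]
        nlinarith
      have hclosed : IsClosed {z : Y × ℝ | 0 ≤ lam z.1 + z.2} := by
        have : Continuous fun z : Y × ℝ => lam z.1 + z.2 :=
          (lam.continuous.comp continuous_fst).add continuous_snd
        exact isClosed_le continuous_const this
      have := (closure_minimal hsub hclosed) hzcl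
      simp only [Set.mem_setOf_eq, map_zero, zero_add] at this
      linarith
    · push_neg at hA
      obtain ⟨x, hx⟩ := hA
      obtain ⟨r, hr1, hr2⟩ := ereal_exists_real_le (a := F x 0) (c := 0) hx
      have hrinv : r⁻¹ < 0 := inv_lt_zero.mpr hr2
      refine ⟨-r⁻¹, by simp only [Set.mem_Ici]; linarith, (0, r), ⟨x, hr1⟩, ?_⟩
      have hr : r ≠ 0 := hr2.ne
      simp only [Prod.ext_iff, Prod.smul_fst, Prod.smul_snd, smul_eq_mul, smul_zero]
      constructor
      · simp
      · field_simp
  · -- closedness regarding {(0,-1)} → validity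
    intro hcl hA
    by_cases hne : ℱ.Nonempty
    · have h01 : ((0 : Y), (-1 : ℝ)) ∉ C := by
        rintro ⟨t, ht, ⟨y, r⟩, ⟨x, hxr⟩, heq⟩
        rw [Prod.ext_iff] at heq
        simp only [Prod.smul_fst, Prod.smul_snd, smul_eq_mul] at heq
        obtain ⟨h1, h2⟩ := heq
        have htpos : 0 < t := by
          rcases lt_or_eq_of_le (Set.mem_Ici.mp ht) with h | h
          · exact h
          · exfalso; rw [← h] at h2; simp at h2
        have hy : y = 0 := (smul_eq_zero.mp h1.symm).resolve_left htpos.ne'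
        have hrneg : r < 0 := by nlinarith
        rw [hy] at hxr
        have h3 : (0 : EReal) ≤ (r : EReal) := le_trans (hA x) hxr
        have : (0:ℝ) ≤ r := by exact_mod_cast h3
        linarith
      have h01cl : ((0 : Y), (-1 : ℝ)) ∉ closure C := by
        intro h
        have : ((0 : Y), (-1 : ℝ)) ∈ C ∩ {((0 : Y), (-1 : ℝ))} := by
          rw [← hcl]; exact ⟨h, rfl⟩
        exact h01 this.1
      obtain ⟨f, u, hfu, hsep⟩ :=
        geometric_hahn_banach_point_closed hconv isClosed_closure h01cl
      obtain ⟨s, hs⟩ := hne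
      have h0C : (0 : Y × ℝ) ∈ C := ⟨0, Set.self_mem_Ici, s, hs, by simp⟩
      have hu0 : u < 0 := by
        have := hsep 0 (subset_closure h0C)
        simpa using this
      have hfnn : ∀ p ∈ ℱ, 0 ≤ f p := by
        intro p hp
        by_contra hneg
        push_neg at hneg
        have ht : 0 < u / f p := div_pos_of_neg_of_neg hu0 hneg
        have hmem : (u / f p) • p ∈ C := ⟨u / f p, le_of_lt ht, p, hp, rfl⟩
        have := hsep _ (subset_closure hmem)
        rw [map_smul] at this
        simp only [smul_eq_mul] at this
        rw [div_mul_cancel₀ _ hneg.ne] at this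
        exact lt_irrefl u this
      set β : ℝ := f ((0 : Y), (1 : ℝ)) with hβ
      have hfm1 : f ((0:Y), (-1:ℝ)) = -β := by
        have h : ((0:Y), (-1:ℝ)) = -(((0:Y), (1:ℝ)) : Y × ℝ) := by
          simp [Prod.ext_iff]
        rw [h, map_neg]
      have hβpos : 0 < β := by
        rw [hfm1] at hfu; linarith
      set g : Y →L[ℝ] ℝ := f.comp (ContinuousLinearMap.inl ℝ Y ℝ) with hg
      have hdecomp : ∀ (y : Y) (r : ℝ), f (y, r) = g y + r * β := by
        intro y r
        have h1 : ((y, r) : Y × ℝ) = ((y, (0:ℝ)) : Y × ℝ) + r • (((0:Y), (1:ℝ)) : Y × ℝ) := by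
          simp [Prod.ext_iff]
        rw [h1, map_add, map_smul, smul_eq_mul]
        rw [hg]
        simp [ContinuousLinearMap.comp_apply, ContinuousLinearMap.inl_apply, mul_comm, ← hβ]
      refine ⟨β⁻¹ • g, fun x y => ?_⟩
      by_contra hlt
      push_neg at hlt
      set l : ℝ := β⁻¹ * g y with hl
      have hval : ((β⁻¹ • g) y : ℝ) = l := by
        simp [hl, smul_eq_mul]
      rw [hval] at hlt
      have hFlt : F x y < ((-l : ℝ) : EReal) := by
        by_contra hge
        push_neg at hge
        have h0 : (0 : EReal) ≤ F x y + (l : EReal) := by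
          calc (0 : EReal) = ((-l + l : ℝ) : EReal) := by norm_num
          _ ≤ F x y + (l : EReal) := by
              rw [EReal.coe_add]
              exact add_le_add_left hge _
        exact absurd h0 (not_le.mpr hlt)
      obtain ⟨r, hr1, hr2⟩ := ereal_exists_real_le hFlt
      have hmem : ((y, r) : Y × ℝ) ∈ ℱ := ⟨x, hr1⟩
      have hge0 := hfnn _ hmem
      rw [hdecomp y r] at hge0
      have hlt2 : r * β < -(g y) := by
        have h := mul_lt_mul_of_pos_right hr2 hβpos
        calc r * β < -l * β := h
        _ = -(g y) := by rw [hl]; field_simp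
      linarith
    · refine ⟨0, fun x y => ?_⟩
      have htop : F x y = ⊤ := by
        by_contra h
        obtain ⟨b, hb1, hb2⟩ := exists_between (lt_top_iff_ne_top.mpr h)
        lift b to ℝ using ⟨hb2.ne, (bot_le.trans_lt hb1).ne'⟩
        exact hne ⟨(y, b), x, hb1.le⟩
      simp [htop]
end

section
/- Let X and Y be locally convex Hausdorff real topological vector spaces, U an index set, F_u : X × Y → ℝ ∪ {±∞} for u ∈ U. Define p(x) = sup_{u∈U} F_u(x,0) and q(x') = inf_{(u,μ)∈U×Y*} (F_u)*(x',μ) for x' ∈ X*. Then q*(x) = sup_{u∈U} (F_u)**(x,0) ≤ p(x) for all x ∈ X. -/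
open scoped Classical

/-- For a real constant `r`, subtraction turns infima into suprema on `EReal`. -/
lemma real_sub_iInf {ι : Sort*} (r : ℝ) (f : ι → EReal) :
    (r : EReal) - ⨅ i, f i = ⨆ i, ((r : EReal) - f i) := by
  refine le_antisymm ?_ (iSup_le fun i => EReal.sub_le_sub le_rfl (iInf_le f i))
  rw [← EReal.ge_of_forall_gt_iff_ge]
  intro z hz
  have h1 : (z : EReal) + (⨅ i, f i) < (r : EReal) := by
    refine (EReal.lt_sub_iff_add_lt ?_ ?_).1 hz
    · exact Or.inr (EReal.coe_ne_top z)
    · exact Or.inr (EReal.coe_ne_bot z)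
  have h2 : (⨅ i, f i) < ((r - z : ℝ) : EReal) := by
    rw [EReal.coe_sub]
    refine (EReal.lt_sub_iff_add_lt (Or.inl (EReal.coe_ne_bot z))
      (Or.inl (EReal.coe_ne_top z))).2 ?_
    rwa [add_comm] at h1
  obtain ⟨i, hi⟩ := iInf_lt_iff.1 h2
  have h3 : (z : EReal) < (r : EReal) - f i := by
    refine (EReal.lt_sub_iff_add_lt (Or.inr (EReal.coe_ne_top z))
      (Or.inr (EReal.coe_ne_bot z))).2 ?_
    have := (EReal.lt_sub_iff_add_lt (Or.inl (EReal.coe_ne_bot z))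
      (Or.inl (EReal.coe_ne_top z))).1 (lt_of_lt_of_le hi (by norm_cast; rw [EReal.coe_sub]))
    rwa [add_comm]
  exact le_trans h3.le (le_iSup (fun i => (r : EReal) - f i) i)

/-- Swapping subtraction in an inequality, when the minuend is real. -/
lemma real_sub_le_swap (a : ℝ) (s t : EReal) (h : (a : EReal) - t ≤ s) :
    (a : EReal) - s ≤ t := by
  rcases eq_or_ne s ⊤ with hs | hs
  · simp [hs]
  rcases eq_or_ne t ⊤ with ht | ht
  · simp [ht]
  rcases eq_or_ne t ⊥ with hb | hb
  · rw [hb, EReal.coe_sub_bot] at h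
    exact absurd (top_le_iff.1 h) hs
  refine EReal.sub_le_of_le_add' ?_
  exact (EReal.sub_le_iff_le_add (Or.inl hb) (Or.inl ht)).1 h

variable {X Y : Type*}
  [AddCommGroup X] [Module ℝ X] [TopologicalSpace X] [IsTopologicalAddGroup X]
  [ContinuousSMul ℝ X] [LocallyConvexSpace ℝ X] [T2Space X]
  [AddCommGroup Y] [Module ℝ Y] [TopologicalSpace Y] [IsTopologicalAddGroup Y]
  [ContinuousSMul ℝ Y] [LocallyConvexSpace ℝ Y] [T2Space Y]

/-- Fenchel conjugate of `F : X × Y → ℝ̄` on `X* × Y*`. -/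
noncomputable def fConj (F : X → Y → EReal) (x' : X →L[ℝ] ℝ) (y' : Y →L[ℝ] ℝ) : EReal :=
  ⨆ p : X × Y, (((x' p.1 + y' p.2 : ℝ) : EReal) - F p.1 p.2)

/-- Fenchel biconjugate of `F : X × Y → ℝ̄` on `X × Y`. -/
noncomputable def fBiconj (F : X → Y → EReal) (x : X) (y : Y) : EReal :=
  ⨆ q : (X →L[ℝ] ℝ) × (Y →L[ℝ] ℝ), (((q.1 x + q.2 y : ℝ) : EReal) - fConj F q.1 q.2)

lemma fBiconj_at_zero (F : X → Y → EReal) (x : X) :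
    fBiconj F x 0 = ⨆ q : (X →L[ℝ] ℝ) × (Y →L[ℝ] ℝ), (((q.1 x : ℝ) : EReal) - fConj F q.1 q.2) := by
  unfold fBiconj
  congr 1
  funext p
  simp

lemma fBiconj_le (F : X → Y → EReal) (x : X) : fBiconj F x 0 ≤ F x 0 := by
  rw [fBiconj_at_zero]
  refine iSup_le fun p => real_sub_le_swap _ _ _ ?_
  have := le_iSup (fun pt : X × Y => (((p.1 pt.1 + p.2 pt.2 : ℝ) : EReal) - F pt.1 pt.2)) (x, 0)
  simpa [fConj] using this

/-- The paper's relations `q*(x) = sup_u (F_u)**(x,0) ≤ p(x)` for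
`q(x') = inf_{(u,μ)} (F_u)*(x',μ)` and `p(x) = sup_u F_u(x,0)`. -/
theorem stmt_8 {U : Type*} (F : U → X → Y → EReal)
    (q : (X →L[ℝ] ℝ) → EReal)
    (hq : q = fun x' => ⨅ w : U × (Y →L[ℝ] ℝ), fConj (F w.1) x' w.2) :
    ∀ x : X,
      (⨆ x' : X →L[ℝ] ℝ, (((x' x : ℝ) : EReal) - q x')) =
          (⨆ u : U, fBiconj (F u) x 0) ∧
        (⨆ x' : X →L[ℝ] ℝ, (((x' x : ℝ) : EReal) - q x')) ≤ ⨆ u : U, F u x 0 := by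
  intro x
  have key : (⨆ x' : X →L[ℝ] ℝ, (((x' x : ℝ) : EReal) - q x')) =
      ⨆ u : U, fBiconj (F u) x 0 := by
    subst hq
    simp only [real_sub_iInf]
    refine le_antisymm ?_ ?_
    · refine iSup_le fun x' => iSup_le fun w => ?_
      refine le_trans ?_ (le_iSup _ w.1)
      rw [fBiconj_at_zero]
      exact le_iSup (fun p : (X →L[ℝ] ℝ) × (Y →L[ℝ] ℝ) =>
        (((p.1 x : ℝ) : EReal) - fConj (F w.1) p.1 p.2)) (x', w.2)
    · refine iSup_le fun u => ?_
      rw [fBiconj_at_zero]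
      refine iSup_le fun p => ?_
      refine le_trans ?_ (le_iSup _ p.1)
      exact le_iSup (fun w : U × (Y →L[ℝ] ℝ) =>
        (((p.1 x : ℝ) : EReal) - fConj (F w.1) p.1 w.2)) (u, p.2)
  exact ⟨key, key ▸ iSup_mono fun u => fBiconj_le (F u) x⟩
end

section
/- Let X, Y be locally convex Hausdorff real topological vector spaces, U an index set, F_u : X × Y → ℝ ∪ {±∞}. Let ℱ^# = {(x',s) ∈ X* × ℝ : ∃ (u,μ) ∈ U × Y*, (F_u)*(x',μ) ≤ s} and q(x') = inf_{(u,μ)} (F_u)*(x',μ). Then the weak*-closed convex hull of ℱ^# is contained in epi q**, and epi q** ⊆ epi p* where p(x) = sup_{u} F_u(x,0). -/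
variable {X Y : Type*}
  [AddCommGroup X] [Module ℝ X] [TopologicalSpace X] [IsTopologicalAddGroup X]
  [ContinuousSMul ℝ X] [LocallyConvexSpace ℝ X] [T2Space X]
  [AddCommGroup Y] [Module ℝ Y] [TopologicalSpace Y] [IsTopologicalAddGroup Y]
  [ContinuousSMul ℝ Y] [LocallyConvexSpace ℝ Y] [T2Space Y]

/-- Fenchel conjugate of `F : X × Y → ℝ̄`, with first dual variable in the
weak* dual of `X`. -/
noncomputable def wConj (F : X → Y → EReal) (x' : WeakDual ℝ X) (y' : Y →L[ℝ] ℝ) : EReal :=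
  ⨆ p : X × Y, (((x' p.1 + y' p.2 : ℝ) : EReal) - F p.1 p.2)

/-- Conjugate on `X` of a function defined on the weak* dual of `X`. -/
noncomputable def dConj (q : WeakDual ℝ X → EReal) (a : X) : EReal :=
  ⨆ x' : WeakDual ℝ X, (((x' a : ℝ) : EReal) - q x')

/-- Biconjugate (on the weak* dual again) of a function on the weak* dual. -/
noncomputable def dBiconj (q : WeakDual ℝ X → EReal) (x' : WeakDual ℝ X) : EReal :=
  ⨆ a : X, (((x' a : ℝ) : EReal) - dConj q a)

private lemma sub_sub_le' (a : ℝ) (b : EReal) : (a : EReal) - ((a : EReal) - b) ≤ b := by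
  induction b using EReal.rec with
  | bot => simp [EReal.coe_sub_bot, EReal.sub_top]
  | coe r => norm_cast; linarith
  | top => exact le_top

private lemma dBiconj_le (q : WeakDual ℝ X → EReal) (x' : WeakDual ℝ X) :
    dBiconj q x' ≤ q x' := by
  refine iSup_le fun a => ?_
  have h1 : ((x' a : ℝ) : EReal) - q x' ≤ dConj q a := le_iSup (fun y' : WeakDual ℝ X => ((y' a : ℝ) : EReal) - q y') x'
  calc ((x' a : ℝ) : EReal) - dConj q a
      ≤ ((x' a : ℝ) : EReal) - (((x' a : ℝ) : EReal) - q x') := EReal.sub_le_sub le_rfl h1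
    _ ≤ q x' := sub_sub_le' _ _

/-- `cl co ℱ^# ⊆ epi q** ⊆ epi p*`. -/
theorem stmt_9 {U : Type*} (F : U → X → Y → EReal)
    (q : WeakDual ℝ X → EReal)
    (hq : q = fun x' => ⨅ w : U × (Y →L[ℝ] ℝ), wConj (F w.1) x' w.2)
    (p : X → EReal) (hp : p = fun x => ⨆ u : U, F u x 0) :
    closure (convexHull ℝ
        {z : WeakDual ℝ X × ℝ | ∃ (u : U) (μ : Y →L[ℝ] ℝ), wConj (F u) z.1 μ ≤ (z.2 : EReal)}) ⊆
        {z : WeakDual ℝ X × ℝ | dBiconj q z.1 ≤ (z.2 : EReal)} ∧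
      {z : WeakDual ℝ X × ℝ | dBiconj q z.1 ≤ (z.2 : EReal)} ⊆
        {z : WeakDual ℝ X × ℝ | (⨆ x : X, (((z.1 x : ℝ) : EReal) - p x)) ≤ (z.2 : EReal)} := by
  -- the epigraph of dBiconj as an intersection
  have hT : {z : WeakDual ℝ X × ℝ | dBiconj q z.1 ≤ (z.2 : EReal)} =
      ⋂ a : X, {z : WeakDual ℝ X × ℝ | ((z.1 a : ℝ) : EReal) - dConj q a ≤ (z.2 : EReal)} := by
    ext z; simp [dBiconj, iSup_le_iff, Set.mem_iInter]
  have hTa : ∀ a : X, IsClosed {z : WeakDual ℝ X × ℝ | ((z.1 a : ℝ) : EReal) - dConj q a ≤ (z.2 : EReal)} ∧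
      Convex ℝ {z : WeakDual ℝ X × ℝ | ((z.1 a : ℝ) : EReal) - dConj q a ≤ (z.2 : EReal)} := by
    intro a
    generalize dConj q a = c
    induction c using EReal.rec with
    | bot =>
      have : {z : WeakDual ℝ X × ℝ | ((z.1 a : ℝ) : EReal) - (⊥ : EReal) ≤ (z.2 : EReal)} = ∅ := by
        ext z
        simp only [Set.mem_setOf_eq, Set.mem_empty_iff_false, iff_false, not_le,
          EReal.coe_sub_bot]
        exact EReal.coe_lt_top _
      rw [this]; exact ⟨isClosed_empty, convex_empty⟩
    | coe r =>
      have : {z : WeakDual ℝ X × ℝ | ((z.1 a : ℝ) : EReal) - ((r : ℝ) : EReal) ≤ (z.2 : EReal)} =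
          {z : WeakDual ℝ X × ℝ | z.1 a - z.2 ≤ r} := by
        ext z
        rw [Set.mem_setOf_eq, Set.mem_setOf_eq, ← EReal.coe_sub, EReal.coe_le_coe_iff]
        constructor <;> intro h <;> linarith
      rw [this]
      have hcont : Continuous fun z : WeakDual ℝ X × ℝ => z.1 a - z.2 :=
        ((WeakDual.eval_continuous a).comp continuous_fst).sub continuous_snd
      constructor
      · exact isClosed_le hcont continuous_const
      · intro z hz w hw s t hs ht hst
        simp only [Set.mem_setOf_eq] at hz hw ⊢
        have h1 : (s • z + t • w).1 a = s * z.1 a + t * w.1 a := by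
          rfl
        have h2 : (s • z + t • w).2 = s * z.2 + t * w.2 := by
          simp [Prod.snd_add, Prod.smul_snd, smul_eq_mul]
        rw [h1, h2]
        have h3 : s * (z.1 a - z.2) ≤ s * r := mul_le_mul_of_nonneg_left hz hs
        have h4 : t * (w.1 a - w.2) ≤ t * r := mul_le_mul_of_nonneg_left hw ht
        have h5 : s * r + t * r = r := by rw [← add_mul, hst, one_mul]
        nlinarith [h3, h4, h5]
    | top =>
      have : {z : WeakDual ℝ X × ℝ | ((z.1 a : ℝ) : EReal) - (⊤ : EReal) ≤ (z.2 : EReal)} = Set.univ := by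
        ext z; simp [EReal.sub_top]
      rw [this]; exact ⟨isClosed_univ, convex_univ⟩
  constructor
  · -- first inclusion
    refine closure_minimal (convexHull_min ?_ ?_) ?_
    · -- S ⊆ T
      rintro z ⟨u, μ, hz⟩
      refine le_trans (dBiconj_le q z.1) (le_trans ?_ hz)
      rw [hq]
      exact iInf_le (fun w : U × (Y →L[ℝ] ℝ) => wConj (F w.1) z.1 w.2) (u, μ)
    · rw [hT]; exact convex_iInter fun a => (hTa a).2
    · rw [hT]; exact isClosed_iInter fun a => (hTa a).1
  · -- second inclusion
    intro z hz
    simp only [Set.mem_setOf_eq] at hz ⊢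
    refine le_trans (iSup_le fun x => ?_) hz
    have hdc : dConj q x ≤ p x := by
      refine iSup_le fun x' => ?_
      have hq' : ((x' x : ℝ) : EReal) - p x ≤ q x' := by
        rw [hq]
        refine le_iInf fun w => ?_
        have h1 : ((x' x + w.2 0 : ℝ) : EReal) - F w.1 x 0 ≤ wConj (F w.1) x' w.2 :=
          le_iSup (fun pt : X × Y => ((x' pt.1 + w.2 pt.2 : ℝ) : EReal) - F w.1 pt.1 pt.2) (x, 0)
        have h2 : ((x' x + w.2 0 : ℝ) : EReal) = ((x' x : ℝ) : EReal) := by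
          rw [map_zero, add_zero]
        have h3 : F w.1 x 0 ≤ p x := by
          rw [hp]; exact le_iSup (fun u => F u x 0) w.1
        calc ((x' x : ℝ) : EReal) - p x ≤ ((x' x : ℝ) : EReal) - F w.1 x 0 :=
              EReal.sub_le_sub le_rfl h3
          _ = ((x' x + w.2 0 : ℝ) : EReal) - F w.1 x 0 := by rw [h2]
          _ ≤ wConj (F w.1) x' w.2 := h1
      calc ((x' x : ℝ) : EReal) - q x'
          ≤ ((x' x : ℝ) : EReal) - (((x' x : ℝ) : EReal) - p x) := EReal.sub_le_sub le_rfl hq'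
        _ ≤ p x := sub_sub_le' _ _
    calc ((z.1 x : ℝ) : EReal) - p x ≤ ((z.1 x : ℝ) : EReal) - dConj q x :=
          EReal.sub_le_sub le_rfl hdc
      _ ≤ dBiconj q z.1 := le_iSup (fun a => ((z.1 a : ℝ) : EReal) - dConj q a) x
end

section
/- Let X, Y be locally convex Hausdorff real topological vector spaces, U an index set, F_u : X × Y → ℝ ∪ {±∞}, q(x') = inf_{(u,μ)∈U×Y*} (F_u)*(x',μ), and ℱ^# = {(x',s) : ∃(u,μ), (F_u)*(x',μ) ≤ s}. If dom q* ≠ ∅, then epi q** equals the weak*-closed convex hull of ℱ^#. -/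
set_option maxHeartbeats 1000000

section Aux

variable {X₀ : Type*} [AddCommGroup X₀] [Module ℝ X₀] [TopologicalSpace X₀]

/-- Every continuous linear functional on a weak-star dual is evaluation at a point. -/
lemma weakBilin_dual_char (φ : WeakBilin (topDualPairing ℝ X₀) →L[ℝ] ℝ) :
    ∃ a : X₀, ∀ x' : WeakBilin (topDualPairing ℝ X₀), φ x' = topDualPairing ℝ X₀ x' a := by
  classical
  have hp := LinearMap.weakBilin_withSeminorms (topDualPairing ℝ X₀)
  have : Nonempty X₀ := ⟨0⟩
  have hqc : Continuous
      ((φ : WeakBilin (topDualPairing ℝ X₀) →ₗ[ℝ] ℝ).toSeminorm :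
        WeakBilin (topDualPairing ℝ X₀) → ℝ) := by
    show Continuous fun x => ‖φ x‖
    exact continuous_norm.comp φ.continuous
  obtain ⟨s, C, hC0, hC⟩ := Seminorm.bound_of_continuous hp _ hqc
  let L : s → (X₀ →L[ℝ] ℝ) →ₗ[ℝ] ℝ := fun a => (topDualPairing ℝ X₀).flip a
  have hker : ⨅ i, LinearMap.ker (L i) ≤
      LinearMap.ker (φ : WeakBilin (topDualPairing ℝ X₀) →ₗ[ℝ] ℝ) := by
    intro x hx
    simp only [Submodule.mem_iInf, LinearMap.mem_ker] at hx ⊢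
    have h1 : (s.sup (topDualPairing ℝ X₀).toSeminormFamily) x = 0 := by
      apply le_antisymm _ (apply_nonneg _ _)
      have h0 : ∀ a ∈ s, (topDualPairing ℝ X₀).toSeminormFamily a x = 0 := by
        intro a ha
        show ‖(topDualPairing ℝ X₀ x) a‖ = 0
        have h00 : (topDualPairing ℝ X₀ x) a = 0 := hx ⟨a, ha⟩
        simp [h00]
      exact Seminorm.finset_sup_apply_le le_rfl (fun a ha => le_of_eq (h0 a ha))
    have h2 : ‖φ x‖ ≤ (C : NNReal) • ((s.sup (topDualPairing ℝ X₀).toSeminormFamily) x) := hC x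
    rw [h1, smul_zero] at h2
    show (φ : WeakBilin (topDualPairing ℝ X₀) →ₗ[ℝ] ℝ) x = 0
    simpa using le_antisymm h2 (norm_nonneg _)
  have hmem := mem_span_of_iInf_ker_le_ker (𝕜 := ℝ) (E := X₀ →L[ℝ] ℝ) (ι := {x // x ∈ s})
    (L := L) (K := (φ : WeakBilin (topDualPairing ℝ X₀) →ₗ[ℝ] ℝ)) hker
  obtain ⟨c, hc⟩ := (Finsupp.mem_span_range_iff_exists_finsupp).1 hmem
  refine ⟨c.sum fun i r => r • (i : X₀), fun x' => ?_⟩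
  have h4 := LinearMap.congr_fun hc x'
  simp only [LinearMap.coe_sum, Finsupp.sum, Finset.sum_apply, LinearMap.smul_apply,
    smul_eq_mul] at h4
  have h5 : φ x' = ∑ x ∈ c.support, c x * L x x' :=
    h4.symm.trans ((Finset.sum_apply _ _ _).trans (Finset.sum_congr rfl fun i _ => rfl))
  rw [h5]
  show _ = (topDualPairing ℝ X₀ x') (c.sum fun i r => r • (i : X₀))
  rw [map_finsuppSum]
  simp only [Finsupp.sum, map_smul, smul_eq_mul]
  rfl

instance : LocallyConvexSpace ℝ (WeakDual ℝ X₀) :=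
  WeakBilin.locallyConvexSpace (B := topDualPairing ℝ X₀)

/-- Subtraction on `EReal` with a real number on the left can be flipped. -/
lemma er_sub_le_comm (r : ℝ) {b c : EReal} (h : (r : EReal) - c ≤ b) :
    (r : EReal) - b ≤ c := by
  induction b using EReal.rec with
  | bot =>
      induction c using EReal.rec with
      | bot => exact h
      | coe c =>
          rw [← EReal.coe_sub, le_bot_iff] at h
          exact absurd h (EReal.coe_ne_bot _)
      | top => exact le_top
  | coe b =>
      induction c using EReal.rec with
      | bot => rw [EReal.coe_sub_bot, top_le_iff] at h; exact absurd h (EReal.coe_ne_top _)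
      | coe c =>
          rw [← EReal.coe_sub] at h ⊢
          rw [EReal.coe_le_coe_iff] at h ⊢
          linarith
      | top => exact le_top
  | top => simp [EReal.sub_top]

lemma er_exists_real_ge {x : EReal} (h : x ≠ ⊤) : ∃ r : ℝ, x ≤ (r : EReal) := by
  induction x using EReal.rec with
  | bot => exact ⟨0, bot_le⟩
  | coe r => exact ⟨r, le_rfl⟩
  | top => exact absurd rfl h

lemma er_exists_real_between {x : EReal} {β : ℝ} (h : x < (β : EReal)) :
    ∃ s : ℝ, x ≤ (s : EReal) ∧ s < β := by
  induction x using EReal.rec with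
  | bot => exact ⟨β - 1, bot_le, by linarith⟩
  | coe r => exact ⟨r, le_rfl, EReal.coe_lt_coe_iff.1 h⟩
  | top => exact absurd h (by simp)

end Aux

variable {X Y : Type*}
  [AddCommGroup X] [Module ℝ X] [TopologicalSpace X] [IsTopologicalAddGroup X]
  [ContinuousSMul ℝ X] [LocallyConvexSpace ℝ X] [T2Space X]
  [AddCommGroup Y] [Module ℝ Y] [TopologicalSpace Y] [IsTopologicalAddGroup Y]
  [ContinuousSMul ℝ Y] [LocallyConvexSpace ℝ Y] [T2Space Y]

/-- If `dom q* ≠ ∅` then `epi q**` is the weak*-closed convex hull of `ℱ^#`. -/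
theorem stmt_10 {U : Type*} (F : U → X → Y → EReal)
    (q : WeakDual ℝ X → EReal)
    (hq : q = fun x' => ⨅ w : U × (Y →L[ℝ] ℝ), wConj (F w.1) x' w.2)
    (hdom : ∃ a : X, dConj q a ≠ ⊤) :
    {z : WeakDual ℝ X × ℝ | dBiconj q z.1 ≤ (z.2 : EReal)} =
      closure (convexHull ℝ
        {z : WeakDual ℝ X × ℝ | ∃ (u : U) (μ : Y →L[ℝ] ℝ),
          wConj (F u) z.1 μ ≤ (z.2 : EReal)}) := by
  classical
  set G : Set (WeakDual ℝ X × ℝ) :=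
    {z | ∃ (u : U) (μ : Y →L[ℝ] ℝ), wConj (F u) z.1 μ ≤ (z.2 : EReal)} with hG
  set S : Set (WeakDual ℝ X × ℝ) := {z | dBiconj q z.1 ≤ (z.2 : EReal)} with hS
  set C : Set (WeakDual ℝ X × ℝ) := closure (convexHull ℝ G) with hC
  -- q never takes the value ⊥
  obtain ⟨a₀, ha₀⟩ := hdom
  have qnebot : ∀ x', q x' ≠ ⊥ := by
    intro x' hx'
    apply ha₀
    have h1 := le_iSup (fun y' : WeakDual ℝ X => ((y' a₀ : ℝ) : EReal) - q y') x'
    rw [hx', EReal.coe_sub_bot] at h1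
    exact top_le_iff.1 h1
  -- membership in G bounds q
  have hGq : ∀ z ∈ G, q z.1 ≤ (z.2 : EReal) := by
    rintro z ⟨u, μ, h⟩
    rw [hq]
    exact le_trans (iInf_le _ (u, μ)) h
  -- existence of real points above q
  have hGex : ∀ x' : WeakDual ℝ X, q x' ≠ ⊤ → ∃ s : ℝ, (x', s) ∈ G := by
    intro x' hx'
    rw [hq] at hx'
    have h1 : (⨅ w : U × (Y →L[ℝ] ℝ), wConj (F w.1) x' w.2) < ⊤ := hx'.lt_top
    rw [iInf_lt_iff] at h1
    obtain ⟨w, hw⟩ := h1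
    obtain ⟨s, hs⟩ := er_exists_real_ge hw.ne
    exact ⟨s, w.1, w.2, hs⟩
  -- the epigraph S is an intersection of elementary sets
  have hSeq : S = ⋂ a : X,
      {z : WeakDual ℝ X × ℝ | ((z.1 a : ℝ) : EReal) - dConj q a ≤ (z.2 : EReal)} := by
    ext z
    simp [hS, dBiconj, iSup_le_iff, Set.mem_iInter]
  have hSclosed : IsClosed S := by
    rw [hSeq]
    refine isClosed_iInter fun a => ?_
    generalize dConj q a = d
    induction d using EReal.rec with
    | bot =>
        convert isClosed_empty
        ext z
        simp [EReal.coe_sub_bot]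
    | coe m =>
        have : {z : WeakDual ℝ X × ℝ | ((z.1 a : ℝ) : EReal) - (m : EReal) ≤ (z.2 : EReal)}
            = {z : WeakDual ℝ X × ℝ | z.1 a - z.2 ≤ m} := by
          ext z
          rw [Set.mem_setOf_eq, ← EReal.coe_sub, EReal.coe_le_coe_iff, Set.mem_setOf_eq]
          constructor <;> intro h <;> linarith
        rw [this]
        exact isClosed_le (((WeakDual.eval_continuous a).comp continuous_fst).sub
          continuous_snd) continuous_const
    | top =>
        convert isClosed_univ
        ext z
        simp [EReal.sub_top]
  have hSconvex : Convex ℝ S := by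
    rw [hSeq]
    refine convex_iInter fun a => ?_
    generalize dConj q a = d
    induction d using EReal.rec with
    | bot =>
        have he : {z : WeakDual ℝ X × ℝ | ((z.1 a : ℝ) : EReal) - (⊥ : EReal) ≤ (z.2 : EReal)}
            = (∅ : Set (WeakDual ℝ X × ℝ)) := by
          ext z
          simp [EReal.coe_sub_bot]
        rw [he]
        exact convex_empty
    | coe m =>
        have : {z : WeakDual ℝ X × ℝ | ((z.1 a : ℝ) : EReal) - (m : EReal) ≤ (z.2 : EReal)}
            = {z : WeakDual ℝ X × ℝ | z.1 a - z.2 ≤ m} := by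
          ext z
          rw [Set.mem_setOf_eq, ← EReal.coe_sub, EReal.coe_le_coe_iff, Set.mem_setOf_eq]
          constructor <;> intro h <;> linarith
        rw [this]
        refine convex_halfSpace_le ⟨fun z w => ?_, fun r z => ?_⟩ m
        · show (z.1 + w.1) a - (z.2 + w.2) = _
          rw [show (z.1 + w.1) a = z.1 a + w.1 a from rfl]
          ring
        · show (r • z.1) a - (r • z.2) = _
          rw [show (r • z.1) a = r • z.1 a from rfl]
          show r * z.1 a - r * z.2 = _
          simp [smul_eq_mul]
          ring
    | top =>
        have he : {z : WeakDual ℝ X × ℝ | ((z.1 a : ℝ) : EReal) - (⊤ : EReal) ≤ (z.2 : EReal)}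
            = (Set.univ : Set (WeakDual ℝ X × ℝ)) := by
          ext z
          simp [EReal.sub_top]
        rw [he]
        exact convex_univ
  -- G ⊆ S
  have hGS : G ⊆ S := by
    intro z hz
    have h1 : q z.1 ≤ (z.2 : EReal) := hGq z hz
    show dBiconj q z.1 ≤ (z.2 : EReal)
    simp only [dBiconj]
    refine iSup_le fun a => ?_
    have h2 : ((z.1 a : ℝ) : EReal) - q z.1 ≤ dConj q a :=
      le_iSup (fun x' : WeakDual ℝ X => ((x' a : ℝ) : EReal) - q x') z.1
    exact le_trans (er_sub_le_comm _ h2) h1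
  -- RHS ⊆ LHS
  have hCS : C ⊆ S := closure_minimal (convexHull_min hGS hSconvex) hSclosed
  refine Set.Subset.antisymm ?_ hCS
  -- the hard direction
  intro z₀ hz₀
  by_contra hz₀C
  -- the degenerate case q ≡ ⊤
  by_cases hall : ∀ x', q x' = ⊤
  · have h1 : ∀ a : X, dConj q a = ⊥ := by
      intro a
      simp only [dConj, iSup_eq_bot]
      intro x'
      rw [hall x', EReal.sub_top]
    have h2 : dBiconj q z₀.1 = ⊤ := by
      simp only [dBiconj]
      refine top_le_iff.1 ?_
      refine le_trans ?_ (le_iSup (fun a : X => ((z₀.1 a : ℝ) : EReal) - dConj q a) (0 : X))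
      rw [h1, EReal.coe_sub_bot]
    rw [hS] at hz₀
    simp only [Set.mem_setOf_eq, h2, top_le_iff] at hz₀
    exact (EReal.coe_ne_top _) hz₀
  push_neg at hall
  obtain ⟨x'₀, hx'₀⟩ := hall
  -- separation
  obtain ⟨f, u, hfz₀, hfC⟩ := geometric_hahn_banach_point_closed
    ((convex_convexHull ℝ G).closure) isClosed_closure hz₀C
  -- decompose f
  set g : WeakDual ℝ X →L[ℝ] ℝ := f.comp (ContinuousLinearMap.inl ℝ (WeakDual ℝ X) ℝ) with hgdef
  set c : ℝ := f (0, 1) with hcdef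
  have hsplit : ∀ (x' : WeakDual ℝ X) (s : ℝ), f (x', s) = g x' + s * c := by
    intro x' s
    have h1 : (x', s) = (x', (0 : ℝ)) + s • ((0 : WeakDual ℝ X), (1 : ℝ)) := by
      ext
      · simp
      · simp
    rw [h1, map_add, map_smul]
    simp [hgdef, hcdef, ContinuousLinearMap.inl_apply, smul_eq_mul]
  obtain ⟨a, hga⟩ := weakBilin_dual_char (X₀ := X) g
  have hga' : ∀ x' : WeakDual ℝ X, g x' = x' a := hga
  -- the separation inequalities in terms of a and c
  have hGsep : ∀ z ∈ G, u < z.1 a + z.2 * c := by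
    intro z hz
    have h1 := hfC z (subset_closure (subset_convexHull ℝ G hz))
    rw [show z = (z.1, z.2) from rfl, hsplit, hga'] at h1
    exact h1
  have hz₀sep : z₀.1 a + z₀.2 * c < u := by
    have := hfz₀
    rw [show z₀ = (z₀.1, z₀.2) from rfl, hsplit, hga'] at this
    exact this
  -- a first real point of G over x'₀
  obtain ⟨s₁, hs₁⟩ := hGex x'₀ hx'₀
  -- G is upward closed in the second coordinate
  have hGup : ∀ z ∈ G, ∀ t : ℝ, z.2 ≤ t → (z.1, t) ∈ G := by
    rintro z ⟨u', μ, h⟩ t ht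
    exact ⟨u', μ, le_trans h (EReal.coe_le_coe_iff.2 ht)⟩
  -- c is nonnegative
  have hc0 : 0 ≤ c := by
    by_contra hc
    push_neg at hc
    set t : ℝ := max 0 ((u - x'₀ a - s₁ * c) / c) with htdef
    have ht0 : 0 ≤ t := le_max_left _ _
    have hmem : (x'₀, s₁ + t) ∈ G := hGup _ hs₁ _ (by linarith)
    have h1 := hGsep _ hmem
    simp only at h1
    have h2 : (u - x'₀ a - s₁ * c) / c ≤ t := le_max_right _ _
    have h3 : t * c ≤ ((u - x'₀ a - s₁ * c) / c) * c :=
      mul_le_mul_of_nonpos_right h2 hc.le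
    rw [div_mul_cancel₀ _ hc.ne] at h3
    nlinarith
  rcases hc0.lt_or_eq with hcpos | hczero
  · -- case c > 0
    have hcne : c ≠ 0 := hcpos.ne'
    -- lower bound for q
    have hqlow : ∀ x' : WeakDual ℝ X, (((u - x' a) / c : ℝ) : EReal) ≤ q x' := by
      intro x'
      rw [hq]
      refine le_iInf fun w => ?_
      by_contra h
      push_neg at h
      obtain ⟨s, hs, hs'⟩ := er_exists_real_between h
      have hmem : (x', s) ∈ G := ⟨w.1, w.2, hs⟩
      have h1 := hGsep _ hmem
      simp only at h1
      rw [lt_div_iff₀ hcpos] at hs'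
      linarith
    set b : X := -(c⁻¹ • a) with hbdef
    have hxb : ∀ x' : WeakDual ℝ X, x' b = -(c⁻¹ * x' a) := by
      intro x'
      rw [hbdef, map_neg, map_smul, smul_eq_mul]
    have hconj : dConj q b ≤ ((-(u / c) : ℝ) : EReal) := by
      refine iSup_le fun x' => ?_
      have h1 : ((x' b : ℝ) : EReal) - q x' ≤
          ((x' b : ℝ) : EReal) - (((u - x' a) / c : ℝ) : EReal) :=
        EReal.sub_le_sub le_rfl (hqlow x')
      refine le_trans h1 ?_
      rw [← EReal.coe_sub, EReal.coe_le_coe_iff, hxb]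
      have hcalc : -(c⁻¹ * x' a) - (u - x' a) / c = -(u / c) := by
        field_simp
        ring
      rw [hcalc]
    have hfinal : ((z₀.1 b + u / c : ℝ) : EReal) ≤ dBiconj q z₀.1 := by
      refine le_trans ?_ (le_iSup (fun a' : X => ((z₀.1 a' : ℝ) : EReal) - dConj q a') b)
      have h1 : ((z₀.1 b : ℝ) : EReal) - dConj q b ≥
          ((z₀.1 b : ℝ) : EReal) - ((-(u / c) : ℝ) : EReal) :=
        EReal.sub_le_sub le_rfl hconj
      refine le_trans ?_ h1
      rw [← EReal.coe_sub, EReal.coe_le_coe_iff]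
      ring_nf
      exact le_rfl
    have h2 : ((z₀.1 b + u / c : ℝ) : EReal) ≤ (z₀.2 : EReal) := le_trans hfinal hz₀
    rw [EReal.coe_le_coe_iff, hxb] at h2
    have h3 := mul_le_mul_of_nonneg_right h2 hc0
    have h4 : (-(c⁻¹ * z₀.1 a) + u / c) * c = -(z₀.1 a) + u := by
      field_simp
    rw [h4] at h3
    linarith
  · -- case c = 0
    rw [← hczero] at hz₀sep hGsep
    simp only [mul_zero, add_zero] at hz₀sep hGsep
    have hGa : ∀ x' : WeakDual ℝ X, q x' ≠ ⊤ → u < x' a := by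
      intro x' hx'
      obtain ⟨s, hs⟩ := hGex x' hx'
      exact hGsep _ hs
    -- dConj q a₀ is real
    have hd0bot : dConj q a₀ ≠ ⊥ := by
      intro h
      have h1 : ((x'₀ a₀ : ℝ) : EReal) - q x'₀ ≤ dConj q a₀ :=
        le_iSup (fun y' : WeakDual ℝ X => ((y' a₀ : ℝ) : EReal) - q y') x'₀
      rw [h, le_bot_iff] at h1
      have h2 : q x'₀ ≠ ⊥ := qnebot x'₀
      lift q x'₀ to ℝ using ⟨hx'₀, h2⟩ with v hv
      rw [← EReal.coe_sub] at h1
      exact (EReal.coe_ne_bot _) h1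
    set M : ℝ := (dConj q a₀).toReal with hMdef
    have hM : dConj q a₀ = (M : EReal) := (EReal.coe_toReal ha₀ hd0bot).symm
    have hupos : 0 < u - z₀.1 a := by linarith
    set t : ℝ := max 0 ((z₀.2 - z₀.1 a₀ + M + 1) / (u - z₀.1 a)) with htdef
    have ht0 : 0 ≤ t := le_max_left _ _
    set b : X := a₀ - t • a with hbdef
    have hxb : ∀ x' : WeakDual ℝ X, x' b = x' a₀ - t * x' a := by
      intro x'
      rw [hbdef, map_sub, map_smul, smul_eq_mul]
    have hconj : dConj q b ≤ ((M - t * u : ℝ) : EReal) := by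
      refine iSup_le fun x' => ?_
      by_cases hx' : q x' = ⊤
      · rw [hx', EReal.sub_top]
        exact bot_le
      · lift q x' to ℝ using ⟨hx', qnebot x'⟩ with v hv
        have h1 : ((x' a₀ : ℝ) : EReal) - (v : EReal) ≤ (M : EReal) := by
          rw [← hM, hv]
          exact le_iSup (fun y' : WeakDual ℝ X => ((y' a₀ : ℝ) : EReal) - q y') x'
        rw [← EReal.coe_sub, EReal.coe_le_coe_iff] at h1
        have h2 : u < x' a := hGa x' (by rw [← hv]; exact EReal.coe_ne_top v)
        rw [← EReal.coe_sub, EReal.coe_le_coe_iff, hxb]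
        nlinarith [mul_le_mul_of_nonneg_left h2.le ht0]
    have hfinal : ((z₀.1 b - (M - t * u) : ℝ) : EReal) ≤ dBiconj q z₀.1 := by
      refine le_trans ?_ (le_iSup (fun a' : X => ((z₀.1 a' : ℝ) : EReal) - dConj q a') b)
      have h1 : ((z₀.1 b : ℝ) : EReal) - dConj q b ≥
          ((z₀.1 b : ℝ) : EReal) - ((M - t * u : ℝ) : EReal) :=
        EReal.sub_le_sub le_rfl hconj
      refine le_trans ?_ h1
      rw [← EReal.coe_sub]
    have h2 : ((z₀.1 b - (M - t * u) : ℝ) : EReal) ≤ (z₀.2 : EReal) := le_trans hfinal hz₀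
    rw [EReal.coe_le_coe_iff, hxb] at h2
    have h3 : (z₀.2 - z₀.1 a₀ + M + 1) / (u - z₀.1 a) ≤ t := le_max_right _ _
    rw [div_le_iff₀ hupos] at h3
    nlinarith
end

section
/- Let X, Y be locally convex Hausdorff real topological vector spaces, U an index set, and F_u : X × Y → ℝ ∪ {±∞} for u ∈ U. With ℱ^# = {(x',s) ∈ X* × ℝ : ∃(u,μ) ∈ U × Y*, (F_u)*(x',μ) ≤ s}, the following implications hold: (i) ⟹ (ii) ⟹ (iii), where (i) the robust S_{F_u}-procedure is valid; (ii) the robust S_{(F_u)**}-procedure is valid; (iii) ℱ^# is weak*-closed convex regarding {(0_{X*},0)}. -/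
variable {X Y : Type*}
  [AddCommGroup X] [Module ℝ X] [TopologicalSpace X] [IsTopologicalAddGroup X]
  [ContinuousSMul ℝ X] [LocallyConvexSpace ℝ X] [T2Space X]
  [AddCommGroup Y] [Module ℝ Y] [TopologicalSpace Y] [IsTopologicalAddGroup Y]
  [ContinuousSMul ℝ Y] [LocallyConvexSpace ℝ Y] [T2Space Y]

/-- Fenchel biconjugate of `F : X × Y → ℝ̄` on `X × Y`. -/
noncomputable def wBiconj (F : X → Y → EReal) (x : X) (y : Y) : EReal :=
  ⨆ w : WeakDual ℝ X × (Y →L[ℝ] ℝ), (((w.1 x + w.2 y : ℝ) : EReal) - wConj F w.1 w.2)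

/-- Validity of the robust `S_{G_u}`-procedure. -/
def robustValid {U : Type*} (G : U → X → Y → EReal) : Prop :=
  (∀ x : X, 0 ≤ ⨆ u : U, G u x 0) →
    ∃ (u : U) (lam : Y →L[ℝ] ℝ), ∀ (x : X) (y : Y), 0 ≤ G u x y + ((lam y : ℝ) : EReal)

/-- The biconjugate is a minorant. -/
lemma wBiconj_le (F : X → Y → EReal) (x : X) (y : Y) : wBiconj F x y ≤ F x y := by
  refine iSup_le fun w => ?_
  have h : (((w.1 x + w.2 y : ℝ) : EReal) - F x y) ≤ wConj F w.1 w.2 :=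
    le_iSup (fun p : X × Y => (((w.1 p.1 + w.2 p.2 : ℝ) : EReal) - F p.1 p.2)) (x, y)
  set a : ℝ := w.1 x + w.2 y with ha
  revert h
  induction F x y with
  | bot =>
    intro h
    have hC : wConj F w.1 w.2 = ⊤ := top_le_iff.mp ((EReal.coe_sub_bot a) ▸ h)
    rw [hC, EReal.sub_top]
  | coe r =>
    intro h
    rw [EReal.sub_le_iff_le_add (Or.inr (EReal.coe_ne_top r))
      (Or.inr (EReal.coe_ne_bot r))]
    rw [EReal.sub_le_iff_le_add (Or.inl (EReal.coe_ne_bot r))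
      (Or.inl (EReal.coe_ne_top r))] at h
    rwa [add_comm]
  | top => intro _; exact le_top

/-- If `-lam` minorizes `F`, the conjugate at `(0, -lam)` is nonpositive. -/
lemma wConj_nonpos (F : X → Y → EReal) (lam : Y →L[ℝ] ℝ)
    (h : ∀ (x : X) (y : Y), ((-(lam y) : ℝ) : EReal) ≤ F x y) :
    wConj F (0 : WeakDual ℝ X) (-lam) ≤ 0 := by
  refine iSup_le fun p => ?_
  have h0 : (((0 : WeakDual ℝ X) p.1 + (-lam) p.2 : ℝ) : EReal) = ((-(lam p.2) : ℝ) : EReal) := by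
    rw [show ((0 : WeakDual ℝ X) p.1) = (0 : ℝ) from rfl,
      show ((-lam) p.2) = -(lam p.2) from rfl]
    norm_num
  rw [h0]
  refine EReal.sub_le_of_le_add' ?_
  rw [add_zero]
  exact h p.1 p.2

/-- Shift: `0 ≤ a + c` implies `-c ≤ a` for real `c`. -/
lemma neg_le_of_nonneg_add {a : EReal} {c : ℝ} (h : 0 ≤ a + (c : EReal)) :
    ((-c : ℝ) : EReal) ≤ a := by
  have := EReal.sub_le_sub h (le_refl (c : EReal))
  rwa [zero_sub, EReal.add_sub_cancel_right, ← EReal.coe_neg] at this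

/-- Shift: `-c ≤ a` implies `0 ≤ a + c` for real `c`. -/
lemma nonneg_add_of_neg_le {a : EReal} {c : ℝ} (h : ((-c : ℝ) : EReal) ≤ a) :
    0 ≤ a + (c : EReal) := by
  calc (0 : EReal) = ((-c + c : ℝ) : EReal) := by norm_num
    _ = ((-c : ℝ) : EReal) + (c : EReal) := by rw [EReal.coe_add]
    _ ≤ a + (c : EReal) := add_le_add h le_rfl

/-- Theorem 3.1, implications (i) ⟹ (ii) ⟹ (iii). -/
theorem stmt_11 {U : Type*} (F : U → X → Y → EReal) :
    (robustValid F → robustValid (fun u => wBiconj (F u))) ∧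
      (robustValid (fun u => wBiconj (F u)) →
        closure (convexHull ℝ
            {z : WeakDual ℝ X × ℝ | ∃ (u : U) (μ : Y →L[ℝ] ℝ),
              wConj (F u) z.1 μ ≤ (z.2 : EReal)}) ∩
            {((0 : WeakDual ℝ X), (0 : ℝ))} =
          {z : WeakDual ℝ X × ℝ | ∃ (u : U) (μ : Y →L[ℝ] ℝ),
              wConj (F u) z.1 μ ≤ (z.2 : EReal)} ∩
            {((0 : WeakDual ℝ X), (0 : ℝ))}) := by
  constructor
  · -- (i) ⟹ (ii)
    intro h1 hyp
    obtain ⟨u, lam, hl⟩ := h1 (fun x => le_trans (hyp x)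
      (iSup_mono fun u => wBiconj_le (F u) x 0))
    refine ⟨u, lam, fun x y => ?_⟩
    have hmin : ∀ (x : X) (y : Y), ((-(lam y) : ℝ) : EReal) ≤ F u x y :=
      fun x y => neg_le_of_nonneg_add (hl x y)
    have hconj : wConj (F u) (0 : WeakDual ℝ X) (-lam) ≤ 0 := wConj_nonpos (F u) lam hmin
    refine nonneg_add_of_neg_le ?_
    have hle : (((0 : WeakDual ℝ X) x + (-lam) y : ℝ) : EReal)
        - wConj (F u) (0 : WeakDual ℝ X) (-lam) ≤ wBiconj (F u) x y :=
      le_iSup (fun w : WeakDual ℝ X × (Y →L[ℝ] ℝ) =>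
        (((w.1 x + w.2 y : ℝ) : EReal) - wConj (F u) w.1 w.2)) ((0 : WeakDual ℝ X), -lam)
    refine le_trans ?_ hle
    have h0 : (((0 : WeakDual ℝ X) x + (-lam) y : ℝ) : EReal)
        = ((-(lam y) : ℝ) : EReal) := by
      rw [show ((0 : WeakDual ℝ X) x) = (0 : ℝ) from rfl,
        show ((-lam) y) = -(lam y) from rfl]
      norm_num
    rw [h0]
    calc ((-(lam y) : ℝ) : EReal) = ((-(lam y) : ℝ) : EReal) - 0 := by rw [sub_zero]
      _ ≤ _ := EReal.sub_le_sub (le_refl _) hconj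
  · -- (ii) ⟹ (iii)
    intro h2
    set S : Set (WeakDual ℝ X × ℝ) :=
      {z : WeakDual ℝ X × ℝ | ∃ (u : U) (μ : Y →L[ℝ] ℝ),
        wConj (F u) z.1 μ ≤ (z.2 : EReal)} with hS
    refine Set.Subset.antisymm ?_ (fun z hz =>
      ⟨subset_closure (subset_convexHull ℝ _ hz.1), hz.2⟩)
    rintro z ⟨hcl, hz0⟩
    refine ⟨?_, hz0⟩
    simp only [Set.mem_singleton_iff] at hz0
    subst hz0
    -- key bound: for z ∈ S, eval bound against the sup of biconjugates at (x, 0)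
    have key : ∀ (x : X), ∀ z ∈ S, ((z.1 x - z.2 : ℝ) : EReal) ≤ ⨆ u, wBiconj (F u) x 0 := by
      intro x z hz
      obtain ⟨u, μ, hu⟩ := hz
      refine le_trans ?_ (le_iSup (fun u => wBiconj (F u) x 0) u)
      have hle : (((z.1 x + μ 0 : ℝ) : EReal) - wConj (F u) z.1 μ) ≤ wBiconj (F u) x 0 :=
        le_iSup (fun w : WeakDual ℝ X × (Y →L[ℝ] ℝ) =>
          (((w.1 x + w.2 (0 : Y) : ℝ) : EReal) - wConj (F u) w.1 w.2)) (z.1, μ)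
      refine le_trans ?_ hle
      have h0 : ((z.1 x + μ 0 : ℝ) : EReal) = ((z.1 x : ℝ) : EReal) := by norm_num
      rw [h0, EReal.coe_sub]
      exact EReal.sub_le_sub (le_refl _) hu
    -- the hypothesis of the robust procedure for the biconjugates holds
    have hyp : ∀ x : X, (0 : EReal) ≤ ⨆ u, wBiconj (F u) x 0 := by
      intro x
      by_contra hneg
      push_neg at hneg
      set T : EReal := ⨆ u, wBiconj (F u) x 0 with hT
      have hTtop : T ≠ ⊤ := fun h => absurd (h ▸ hneg) (by simp)
      -- closed convex set containing S but not (0,0)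
      rcases eq_or_ne T ⊥ with hbot | hTbot
      · have hSempty : S = ∅ := by
          ext z
          simp only [Set.mem_empty_iff_false, iff_false]
          intro hz
          have := key x z hz
          rw [← hT, hbot, le_bot_iff] at this
          exact (EReal.coe_ne_bot _) this
        rw [hSempty] at hcl
        simp at hcl
      · set t : ℝ := T.toReal with ht
        have htlt : t < 0 := by
          have h := hneg
          rw [← EReal.coe_toReal hTtop hTbot, ← EReal.coe_zero, EReal.coe_lt_coe_iff] at h
          exact h
        set A : Set (WeakDual ℝ X × ℝ) := {z | z.1 x - z.2 ≤ t} with hA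
        have hSA : S ⊆ A := by
          intro z hz
          have := key x z hz
          rw [← hT, ← EReal.coe_toReal hTtop hTbot, EReal.coe_le_coe_iff] at this
          exact this
        have hAconv : Convex ℝ A := by
          intro z1 h1 z2 h2 a b ha hb hab
          simp only [hA, Set.mem_setOf_eq] at h1 h2 ⊢
          have e1 : ((a • z1 + b • z2).1) x = a * z1.1 x + b * z2.1 x := rfl
          have e2 : (a • z1 + b • z2).2 = a * z1.2 + b * z2.2 := rfl
          rw [e1, e2]
          nlinarith [mul_le_mul_of_nonneg_left h1 ha, mul_le_mul_of_nonneg_left h2 hb]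
        have hAcl : IsClosed A := by
          have hcont : Continuous fun z : WeakDual ℝ X × ℝ => z.1 x - z.2 :=
            ((WeakDual.eval_continuous x).comp continuous_fst).sub continuous_snd
          exact isClosed_le hcont continuous_const
        have : ((0 : WeakDual ℝ X), (0 : ℝ)) ∈ A :=
          closure_minimal (convexHull_min hSA hAconv) hAcl hcl
        simp only [hA, Set.mem_setOf_eq] at this
        rw [show (((0 : WeakDual ℝ X), (0 : ℝ)).1 x : ℝ) = (0 : ℝ) from rfl] at this
        simp only [sub_zero] at this
        linarith [this]
    obtain ⟨u, lam, hl⟩ := h2 hyp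
    refine ⟨u, -lam, ?_⟩
    have hmin : ∀ (x : X) (y : Y), ((-(lam y) : ℝ) : EReal) ≤ F u x y := fun x y =>
      le_trans (neg_le_of_nonneg_add (hl x y)) (wBiconj_le (F u) x y)
    simpa using wConj_nonpos (F u) lam hmin
end

section
/- Let X, Y be locally convex Hausdorff real topological vector spaces, U an index set, F_u : X × Y → ℝ ∪ {±∞}. Assume (H₁): inf_{x∈X} sup_{u∈U} F_u(x,0) = inf_{x∈X} sup_{u∈U} (F_u)**(x,0) ≠ +∞. Then the robust S_{F_u}-procedure is valid if and only if ℱ^# = {(x',s) : ∃(u,μ) ∈ U×Y*, (F_u)*(x',μ) ≤ s} is weak*-closed convex regarding {(0_{X*},0)}. -/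
variable {X Y : Type*}
  [AddCommGroup X] [Module ℝ X] [TopologicalSpace X] [IsTopologicalAddGroup X]
  [ContinuousSMul ℝ X] [LocallyConvexSpace ℝ X] [T2Space X]
  [AddCommGroup Y] [Module ℝ Y] [TopologicalSpace Y] [IsTopologicalAddGroup Y]
  [ContinuousSMul ℝ Y] [LocallyConvexSpace ℝ Y] [T2Space Y]

/-- evaluation at `x` as a linear functional on the weak dual -/
noncomputable def evalLM (x : X) : WeakDual ℝ X →ₗ[ℝ] ℝ where
  toFun x' := x' x
  map_add' _ _ := rfl
  map_smul' _ _ := rfl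

noncomputable instance : LocallyConvexSpace ℝ (WeakDual ℝ X) :=
  WeakBilin.locallyConvexSpace

lemma weakdual_eval (g : WeakDual ℝ X →L[ℝ] ℝ) :
    ∃ x₀ : X, ∀ x' : WeakDual ℝ X, g x' = x' x₀ := by
  have hb := LinearMap.hasBasis_weakBilin (topDualPairing ℝ X)
  have hcont : g ⁻¹' (Metric.ball (0:ℝ) 1) ∈ nhds (0 : WeakDual ℝ X) := by
    have : Metric.ball (0:ℝ) 1 ∈ nhds (g 0) := by
      simp [Metric.ball_mem_nhds]
    exact g.continuous.continuousAt.preimage_mem_nhds this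
  replace hcont := hb.mem_iff.mp hcont
  obtain ⟨V, hV, hVsub⟩ := hcont
  obtain ⟨s, r, hr, rfl⟩ := (SeminormFamily.basisSets_iff _).mp hV
  have hker : (⨅ i : s, LinearMap.ker (evalLM (i : X))) ≤
      LinearMap.ker (g : WeakDual ℝ X →ₗ[ℝ] ℝ) := by
    intro x' hx'
    simp only [Submodule.mem_iInf, LinearMap.mem_ker] at hx' ⊢
    have hz : ∀ t : ℝ, |t * g x'| < 1 := by
      intro t
      have hmem : (show X →L[ℝ] ℝ from t • x') ∈ Seminorm.ball (s.sup ((topDualPairing ℝ X).toSeminormFamily)) 0 r := by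
        rw [Seminorm.mem_ball_zero]
        apply Seminorm.finset_sup_apply_lt hr
        intro i hi
        have : (t • x') i = t * x' i := rfl
        simp only [LinearMap.toSeminormFamily_apply]
        have hx0 : x' i = 0 := hx' ⟨i, hi⟩
        show ‖(t • x') i‖ < r
        rw [this, hx0, mul_zero, norm_zero]
        exact hr
      have := hVsub hmem
      replace this : g (t • x') ∈ Metric.ball (0:ℝ) 1 := this
      rw [abs_mul]
      simpa [Real.norm_eq_abs, map_smul, smul_eq_mul, abs_mul] using this
    by_contra hne
    obtain ⟨t, ht⟩ := exists_nat_gt (|g x'|⁻¹)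
    have h1 := hz ((t:ℝ) + |g x'|⁻¹)
    have hpos : 0 < |g x'| := abs_pos.mpr hne
    rw [abs_mul] at h1
    have : |(t:ℝ) + |g x'|⁻¹| ≥ |g x'|⁻¹ := by
      rw [abs_of_nonneg (by positivity)]; nlinarith [Nat.cast_nonneg (α := ℝ) t]
    nlinarith [inv_mul_cancel₀ (ne_of_gt hpos), mul_le_mul_of_nonneg_right this (le_of_lt hpos)]
  have hmem := mem_span_of_iInf_ker_le_ker (𝕜 := ℝ) hker
  rw [Submodule.mem_span_range_iff_exists_fun] at hmem
  obtain ⟨c, hc⟩ := hmem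
  refine ⟨∑ i : s, c i • (i : X), fun x' => ?_⟩
  have := congrArg (fun (h : WeakDual ℝ X →ₗ[ℝ] ℝ) => h x') hc
  simp only [LinearMap.coe_sum, Finset.sum_apply, LinearMap.smul_apply] at this
  rw [show g x' = (g : WeakDual ℝ X →ₗ[ℝ] ℝ) x' from rfl, ← this]
  have : x' (∑ i : s, c i • (i : X)) = ∑ i : s, c i • x' (i : X) := by
    rw [map_sum]; simp [map_smul]
  rw [this]
  rfl

lemma er_key (c : ℝ) (b : EReal) : (c : EReal) - b ≤ 0 ↔ 0 ≤ b + ((-c : ℝ) : EReal) := by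
  induction b using EReal.rec with
  | bot => simp [EReal.sub_bot]
  | coe b =>
      rw [show ((c:EReal) - (b:EReal)) = ((c - b : ℝ) : EReal) by norm_cast,
        show ((b:EReal) + ((-c:ℝ):EReal)) = ((b + -c : ℝ):EReal) by norm_cast,
        EReal.coe_nonpos, EReal.coe_nonneg]
      constructor <;> intro h <;> linarith
  | top => simp [EReal.sub_top]

/-- Theorem 3.1 under hypothesis `(H₁)`: the robust `S_{F_u}`-procedure is valid
iff `ℱ^#` is weak*-closed convex regarding `{(0, 0)}`. -/
theorem stmt_12 {U : Type*} (F : U → X → Y → EReal)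
    (H1 : (⨅ x : X, ⨆ u : U, F u x 0) = (⨅ x : X, ⨆ u : U, wBiconj (F u) x 0) ∧
      (⨅ x : X, ⨆ u : U, F u x 0) ≠ ⊤) :
    ((∀ x : X, 0 ≤ ⨆ u : U, F u x 0) →
        ∃ (u : U) (lam : Y →L[ℝ] ℝ),
          ∀ (x : X) (y : Y), 0 ≤ F u x y + ((lam y : ℝ) : EReal)) ↔
      closure (convexHull ℝ
          {z : WeakDual ℝ X × ℝ | ∃ (u : U) (μ : Y →L[ℝ] ℝ),
            wConj (F u) z.1 μ ≤ (z.2 : EReal)}) ∩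
          {((0 : WeakDual ℝ X), (0 : ℝ))} =
        {z : WeakDual ℝ X × ℝ | ∃ (u : U) (μ : Y →L[ℝ] ℝ),
            wConj (F u) z.1 μ ≤ (z.2 : EReal)} ∩
          {((0 : WeakDual ℝ X), (0 : ℝ))} := by
  classical
  set A : Set (WeakDual ℝ X × ℝ) :=
    {z : WeakDual ℝ X × ℝ | ∃ (u : U) (μ : Y →L[ℝ] ℝ),
      wConj (F u) z.1 μ ≤ (z.2 : EReal)} with hAdef
  have hsub : A ⊆ closure (convexHull ℝ A) :=
    (subset_convexHull ℝ A).trans subset_closure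
  -- reduce the set equality to an implication
  have hRHS : (closure (convexHull ℝ A) ∩ {((0:WeakDual ℝ X),(0:ℝ))} =
      A ∩ {((0:WeakDual ℝ X),(0:ℝ))})
      ↔ (((0:WeakDual ℝ X),(0:ℝ)) ∈ closure (convexHull ℝ A) →
        ((0:WeakDual ℝ X),(0:ℝ)) ∈ A) := by
    constructor
    · intro h h0
      have : (((0:WeakDual ℝ X),(0:ℝ))) ∈ A ∩ {((0:WeakDual ℝ X),(0:ℝ))} := by
        rw [← h]; exact ⟨h0, rfl⟩
      exact this.1
    · intro h
      ext z
      constructor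
      · rintro ⟨hz, hz2⟩
        rw [Set.mem_singleton_iff] at hz2
        subst hz2
        exact ⟨h hz, rfl⟩
      · rintro ⟨hz, hz2⟩
        exact ⟨hsub hz, hz2⟩
  -- membership of (0,0) in A is equivalent to the S-procedure conclusion
  have hA0 : ((((0:WeakDual ℝ X),(0:ℝ))) ∈ A) ↔
      ∃ (u : U) (lam : Y →L[ℝ] ℝ),
        ∀ (x : X) (y : Y), 0 ≤ F u x y + ((lam y : ℝ) : EReal) := by
    constructor
    · rintro ⟨u, μ, hμ⟩
      refine ⟨u, -μ, fun x y => ?_⟩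
      have hμ' : wConj (F u) 0 μ ≤ (0 : EReal) := by exact_mod_cast hμ
      have h1 : ((((0:WeakDual ℝ X)) x + μ y : ℝ) : EReal) - F u x y ≤ 0 :=
        le_trans (le_iSup (fun p : X × Y =>
          ((((0:WeakDual ℝ X)) p.1 + μ p.2 : ℝ) : EReal) - F u p.1 p.2) ((x, y) : X × Y)) hμ'
      have h0x : ((0:WeakDual ℝ X)) x = 0 := rfl
      rw [h0x, zero_add] at h1
      have := (er_key (μ y) (F u x y)).mp h1
      simpa [ContinuousLinearMap.neg_apply] using this
    · rintro ⟨u, lam, h⟩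
      refine ⟨u, -lam, ?_⟩
      rw [show ((((0:ℝ)):ℝ) : EReal) = (0:EReal) by norm_cast]
      apply iSup_le
      rintro ⟨x, y⟩
      have h0x : ((0:WeakDual ℝ X)) x = 0 := rfl
      have hy : ((-lam) y) = -(lam y) := rfl
      simp only [h0x, zero_add, hy]
      rw [er_key (-(lam y)) (F u x y), neg_neg]
      exact h x y
  rw [hRHS]
  -- positivity transfer through the biconjugate
  have key1 : ((((0:WeakDual ℝ X),(0:ℝ))) ∈ closure (convexHull ℝ A)) →
      ∀ x : X, (0:EReal) ≤ ⨆ u, F u x 0 := by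
    intro h0
    have hposx : ∀ x : X, (0:EReal) ≤ ⨆ u, wBiconj (F u) x 0 := by
      intro x
      by_contra hneg
      push_neg at hneg
      obtain ⟨c, hc2, hc1⟩ : ∃ c : ℝ, (⨆ u, wBiconj (F u) x 0) < (c : EReal) ∧ c < 0 := by
        obtain ⟨c, hc1, hc2⟩ := EReal.exists_between_coe_real hneg
        exact ⟨c, hc1, by exact_mod_cast hc2⟩
      have hsubC : A ⊆ {z : WeakDual ℝ X × ℝ | z.1 x - z.2 ≤ c} := by
        rintro ⟨x', s⟩ ⟨u, μ, hμ⟩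
        have h1 : ((x' x + μ 0 : ℝ) : EReal) - wConj (F u) x' μ ≤ wBiconj (F u) x 0 :=
          le_iSup (fun w : WeakDual ℝ X × (Y →L[ℝ] ℝ) =>
            (((w.1 x + w.2 0 : ℝ) : EReal) - wConj (F u) w.1 w.2)) ((x', μ))
        have h2 : ((x' x : ℝ):EReal) - (s:EReal) ≤ (c:EReal) := by
          calc ((x' x : ℝ):EReal) - (s:EReal)
              ≤ ((x' x + μ 0 : ℝ):EReal) - wConj (F u) x' μ := by
                simp only [map_zero, add_zero]
                exact EReal.sub_le_sub le_rfl hμ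
            _ ≤ wBiconj (F u) x 0 := h1
            _ ≤ ⨆ u, wBiconj (F u) x 0 := le_iSup (fun u : U => wBiconj (F u) x 0) u
            _ ≤ (c:EReal) := hc2.le
        have h3 : ((x' x - s : ℝ) : EReal) ≤ (c : EReal) := by rwa [← EReal.coe_sub] at h2
        exact EReal.coe_le_coe_iff.mp h3
      have hC_closed : IsClosed {z : WeakDual ℝ X × ℝ | z.1 x - z.2 ≤ c} := by
        have hcont : Continuous fun z : WeakDual ℝ X × ℝ => z.1 x - z.2 :=
          ((WeakDual.eval_continuous x).comp continuous_fst).sub continuous_snd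
        exact isClosed_le hcont continuous_const
      have hlin : IsLinearMap ℝ (fun z : WeakDual ℝ X × ℝ => z.1 x - z.2) := by
        constructor
        · intro a b
          show (a.1 + b.1) x - (a.2 + b.2) = _
          rw [show (a.1 + b.1) x = a.1 x + b.1 x from rfl]; ring
        · intro t a
          show (t • a.1) x - t * a.2 = t * (a.1 x - a.2)
          rw [show (t • a.1) x = t * a.1 x from rfl]; ring
      have hCC : closure (convexHull ℝ A) ⊆ {z : WeakDual ℝ X × ℝ | z.1 x - z.2 ≤ c} :=
        closure_minimal (convexHull_min hsubC (convex_halfSpace_le hlin c)) hC_closed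
      have h00 := hCC h0
      simp only [Set.mem_setOf_eq] at h00
      have h0x : ((0:WeakDual ℝ X)) x = 0 := rfl
      rw [h0x] at h00
      linarith
    intro x
    have h1 : (0:EReal) ≤ ⨅ x : X, ⨆ u, wBiconj (F u) x 0 := le_iInf hposx
    rw [← H1.1] at h1
    exact h1.trans (iInf_le (fun x : X => ⨆ u, F u x 0) x)
  constructor
  · intro valid h0
    exact hA0.mpr (valid (key1 h0))
  · intro hclosed hpos
    rw [← hA0]
    apply hclosed
    by_contra h0
    have hU : Nonempty U := by
      by_contra hU
      rw [not_nonempty_iff] at hU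
      have h1 := hpos 0
      rw [iSup_of_empty] at h1
      exact absurd h1 (by simp)
    have hinf : (0:EReal) ≤ ⨅ x : X, ⨆ u, wBiconj (F u) x 0 := by
      rw [← H1.1]; exact le_iInf hpos
    have hne : (⨅ x : X, ⨆ u, wBiconj (F u) x 0) ≠ ⊤ := by rw [← H1.1]; exact H1.2
    obtain ⟨xb, hxb⟩ : ∃ x : X, (⨆ u, wBiconj (F u) x 0) < ⊤ :=
      iInf_lt_iff.mp (lt_top_iff_ne_top.mpr hne)
    have hSb0 : (0:EReal) ≤ ⨆ u, wBiconj (F u) xb 0 :=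
      hinf.trans (iInf_le (fun x : X => ⨆ u, wBiconj (F u) x 0) xb)
    set M : ℝ := (⨆ u, wBiconj (F u) xb 0).toReal with hMdef
    have hSbM : (⨆ u, wBiconj (F u) xb 0) = (M:EReal) :=
      (EReal.coe_toReal hxb.ne
        (by intro h; rw [h] at hSb0; exact absurd hSb0 (by simp))).symm
    have hM : ∀ (u : U) (x' : WeakDual ℝ X) (μ : Y →L[ℝ] ℝ),
        ((x' xb : ℝ) : EReal) - wConj (F u) x' μ ≤ (M : EReal) := by
      intro u x' μ
      have h1 : (((x' xb + μ 0:ℝ)): EReal) - wConj (F u) x' μ ≤ wBiconj (F u) xb 0 :=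
        le_iSup (fun w : WeakDual ℝ X × (Y →L[ℝ] ℝ) =>
          (((w.1 xb + w.2 0 : ℝ) : EReal) - wConj (F u) w.1 w.2)) ((x', μ))
      simp only [map_zero, add_zero] at h1
      exact h1.trans (le_of_le_of_eq (le_iSup (fun u : U => wBiconj (F u) xb 0) u) hSbM)
    have hconj_ne_bot : ∀ (u : U) (x' : WeakDual ℝ X) (μ : Y →L[ℝ] ℝ),
        wConj (F u) x' μ ≠ ⊥ := by
      intro u x' μ h
      have h1 := hM u x' μ
      rw [h, EReal.coe_sub_bot] at h1
      exact absurd h1 (by simp)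
    by_cases htop : ∀ (u:U) (x' : WeakDual ℝ X) (μ : Y →L[ℝ] ℝ), wConj (F u) x' μ = ⊤
    · have hbot : (⨆ u, wBiconj (F u) xb 0) = ⊥ := by
        rw [← le_bot_iff]
        apply iSup_le; intro u
        simp only [wBiconj]
        apply iSup_le; intro w
        rw [htop u w.1 w.2, EReal.sub_top]
      rw [hbot] at hSb0; exact absurd hSb0 (by simp)
    push_neg at htop
    obtain ⟨u₀, x₀', μ₀, hne0⟩ := htop
    set a₀ : ℝ := (wConj (F u₀) x₀' μ₀).toReal with ha₀
    have haa₀ : wConj (F u₀) x₀' μ₀ = (a₀ : EReal) :=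
      (EReal.coe_toReal hne0 (hconj_ne_bot u₀ x₀' μ₀)).symm
    obtain ⟨f, β, hf0, hfA⟩ := geometric_hahn_banach_point_closed
      ((convex_convexHull ℝ A).closure) isClosed_closure h0
    rw [show (((0:WeakDual ℝ X),(0:ℝ)) : WeakDual ℝ X × ℝ) = (0 : WeakDual ℝ X × ℝ) from rfl,
      map_zero] at hf0
    set c : ℝ := f (((0:WeakDual ℝ X), (1:ℝ))) with hcdef
    obtain ⟨x₀, hx₀⟩ := weakdual_eval (f.comp (ContinuousLinearMap.inl ℝ (WeakDual ℝ X) ℝ))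
    have hfz : ∀ z : WeakDual ℝ X × ℝ, f z = z.1 x₀ + c * z.2 := by
      intro z
      have h1 : z = ((z.1, (0:ℝ)) : WeakDual ℝ X × ℝ) +
          (z.2 • (((0:WeakDual ℝ X), (1:ℝ)) : WeakDual ℝ X × ℝ)) := by
        ext
        · show z.1 = z.1 + z.2 • (0:WeakDual ℝ X)
          simp
        · show z.2 = 0 + z.2 • (1:ℝ)
          simp
      calc f z = f ((z.1, (0:ℝ))) + z.2 • f (((0:WeakDual ℝ X), (1:ℝ))) := by
            rw [← map_smul, ← map_add, ← h1]
        _ = z.1 x₀ + c * z.2 := by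
            rw [← hx₀ z.1, smul_eq_mul, mul_comm]
            rfl
    have hsep : ∀ z ∈ A, β < z.1 x₀ + c * z.2 := fun z hz => by
      have h1 := hfA z (hsub hz); rwa [hfz z] at h1
    have hc0 : 0 ≤ c := by
      by_contra hcneg
      push_neg at hcneg
      have hzn : ∀ n : ℕ, (((x₀', a₀ + n)) : WeakDual ℝ X × ℝ) ∈ A := by
        intro n
        refine ⟨u₀, μ₀, ?_⟩
        show wConj (F u₀) x₀' μ₀ ≤ ((a₀ + n : ℝ) : EReal)
        rw [haa₀]
        exact_mod_cast by linarith [Nat.cast_nonneg (α := ℝ) n]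
      obtain ⟨n, hn⟩ := exists_nat_gt ((β - x₀' x₀ - c * a₀)/c)
      have h1 := hsep _ (hzn n)
      simp only at h1
      have h2 : c * n < β - x₀' x₀ - c * a₀ := by
        have h3 := mul_lt_mul_of_neg_left hn hcneg
        rwa [mul_div_cancel₀ _ (ne_of_lt hcneg)] at h3
      nlinarith [h1]
    set t : ℝ := (max M 0 + 1)/β with htdef
    have ht : 0 < t := by
      apply div_pos _ hf0
      have := le_max_right M 0; linarith
    have htβ : M < t * β := by
      rw [htdef, div_mul_cancel₀ _ (ne_of_gt hf0)]
      have := le_max_left M 0; linarith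
    set D : ℝ := 1 + t * c with hDdef
    have hD : 0 < D := by
      rw [hDdef]; nlinarith
    set xh : X := D⁻¹ • (xb - t • x₀) with hxh
    have hbound : ∀ u : U, wBiconj (F u) xh 0 ≤ (((M - t*β)/D : ℝ) : EReal) := by
      intro u
      simp only [wBiconj]
      apply iSup_le
      rintro ⟨x', μ⟩
      simp only [map_zero, add_zero]
      rcases eq_or_ne (wConj (F u) x' μ) ⊤ with htp | htp
      · rw [htp, EReal.sub_top]; exact bot_le
      · have hbot := hconj_ne_bot u x' μ
        have haa : wConj (F u) x' μ = ((wConj (F u) x' μ).toReal : EReal) :=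
          (EReal.coe_toReal htp hbot).symm
        set a := (wConj (F u) x' μ).toReal with hadef
        have hzA : (((x', a)) : WeakDual ℝ X × ℝ) ∈ A := ⟨u, μ, le_of_eq haa⟩
        have h2 : β < x' x₀ + c * a := hsep _ hzA
        have h3 : x' xb - a ≤ M := by
          have h4 := hM u x' μ
          rw [haa, ← EReal.coe_sub] at h4
          exact EReal.coe_le_coe_iff.mp h4
        rw [haa, ← EReal.coe_sub, EReal.coe_le_coe_iff]
        have hxh' : x' xh = D⁻¹ * (x' xb - t * x' x₀) := by
          rw [hxh, map_smul, map_sub, map_smul]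
          simp [smul_eq_mul]
        rw [hxh']
        have key : (x' xb - t * x' x₀) - a * D ≤ M - t*β := by
          rw [hDdef]
          nlinarith [mul_le_mul_of_nonneg_left h2.le ht.le]
        calc D⁻¹ * (x' xb - t * x' x₀) - a = D⁻¹ * ((x' xb - t * x' x₀) - a * D) := by
              field_simp
            _ ≤ D⁻¹ * (M - t*β) := mul_le_mul_of_nonneg_left key (inv_nonneg.mpr hD.le)
            _ = (M - t*β)/D := by rw [inv_mul_eq_div]
    have hfin : (⨅ x : X, ⨆ u, wBiconj (F u) x 0) ≤ (((M - t*β)/D : ℝ):EReal) :=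
      le_trans (iInf_le (fun x : X => ⨆ u, wBiconj (F u) x 0) xh) (iSup_le hbound)
    have hcon : (0:EReal) ≤ (((M - t*β)/D : ℝ):EReal) := le_trans hinf hfin
    rw [EReal.coe_nonneg] at hcon
    have hneg : (M - t*β)/D < 0 := div_neg_of_neg_of_pos (by linarith) hD
    linarith
end

section
/- Let X, Y be locally convex Hausdorff real topological vector spaces and F : X × Y → ℝ ∪ {±∞}. Assume (H₂): inf_{x∈X} F(x,0) = inf_{x∈X} F**(x,0) ≠ +∞. Then the S_F-procedure is valid if and only if the set {(x',s) ∈ X* × ℝ : ∃μ ∈ Y*, F*(x',μ) ≤ s} is weak*-closed regarding {(0_{X*},0)}. -/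
set_option linter.unusedSectionVars false

open Set



variable {X Y : Type*}
  [AddCommGroup X] [Module ℝ X] [TopologicalSpace X] [IsTopologicalAddGroup X]
  [ContinuousSMul ℝ X] [LocallyConvexSpace ℝ X] [T2Space X]
  [AddCommGroup Y] [Module ℝ Y] [TopologicalSpace Y] [IsTopologicalAddGroup Y]
  [ContinuousSMul ℝ Y] [LocallyConvexSpace ℝ Y] [T2Space Y]

section Aux

instance wdLCS : LocallyConvexSpace ℝ (WeakDual ℝ X) := WeakBilin.locallyConvexSpace

lemma wd_zero_apply (x : X) : (0 : WeakDual ℝ X) x = 0 := rfl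
lemma wd_add_apply (f g : WeakDual ℝ X) (x : X) : (f + g) x = f x + g x := rfl
lemma wd_smul_apply (a : ℝ) (f : WeakDual ℝ X) (x : X) : (a • f) x = a * f x := rfl

lemma auxExistsLeCoe {v : EReal} (h : v ≠ ⊤) : ∃ M : ℝ, v ≤ (M : EReal) := by
  induction v using EReal.rec with
  | bot => exact ⟨0, bot_le⟩
  | coe r => exact ⟨r, le_refl _⟩
  | top => exact absurd rfl h

lemma auxEqCoe {v : EReal} (hb : v ≠ ⊥) (ht : v ≠ ⊤) : ∃ w : ℝ, v = (w : EReal) := by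
  induction v using EReal.rec with
  | bot => exact absurd rfl hb
  | coe r => exact ⟨r, rfl⟩
  | top => exact absurd rfl ht

lemma aux1 {v : EReal} {c : ℝ} (h : 0 ≤ v + (c : EReal)) : ((-c : ℝ) : EReal) - v ≤ 0 := by
  induction v using EReal.rec with
  | bot => rw [EReal.bot_add] at h; exact absurd h (by simp)
  | coe r =>
      rw [← EReal.coe_add] at h
      have h' : (0 : ℝ) ≤ r + c := by exact_mod_cast h
      rw [← EReal.coe_sub]
      exact_mod_cast (by linarith : (-c) - r ≤ (0 : ℝ))
  | top => rw [EReal.sub_top]; exact bot_le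

lemma aux2 {v : EReal} {c : ℝ} (h : (c : EReal) - v ≤ 0) : 0 ≤ v + ((-c : ℝ) : EReal) := by
  induction v using EReal.rec with
  | bot => rw [EReal.coe_sub_bot] at h; exact absurd h (by simp)
  | coe r =>
      rw [← EReal.coe_sub] at h
      have h' : c - r ≤ (0 : ℝ) := by exact_mod_cast h
      rw [← EReal.coe_add]
      exact_mod_cast (by linarith : (0 : ℝ) ≤ r + -c)
  | top => rw [EReal.top_add_coe]; exact le_top

/-- Every continuous linear functional on the weak* dual is evaluation at a point. -/
theorem keyDual (φ : WeakDual ℝ X →L[ℝ] ℝ) : ∃ x₀ : X, ∀ x' : WeakDual ℝ X, φ x' = x' x₀ := by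
  have hsem := (topDualPairing ℝ X).weakBilin_withSeminorms
  have : Nonempty X := ⟨0⟩
  obtain ⟨s, C, -, hC⟩ := Seminorm.bound_of_continuous hsem (φ.toLinearMap.toSeminorm)
    (continuous_norm.comp φ.continuous)
  set J : X →ₗ[ℝ] (WeakDual ℝ X →ₗ[ℝ] ℝ) := (topDualPairing ℝ X).flip with hJ
  have hker : (⨅ i : s, LinearMap.ker (J i)) ≤ LinearMap.ker φ.toLinearMap := by
    intro x' hx'
    simp only [Submodule.mem_iInf, LinearMap.mem_ker] at hx' ⊢
    have h0 : (s.sup (LinearMap.toSeminormFamily (topDualPairing ℝ X)) :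
        Seminorm ℝ (WeakBilin (topDualPairing ℝ X))) x' = 0 := by
      apply le_antisymm _ (apply_nonneg _ _)
      apply Seminorm.finset_sup_apply_le le_rfl
      intro i hi
      have := hx' ⟨i, hi⟩
      show ‖((topDualPairing ℝ X) x') i‖ ≤ 0
      have h2 : ((topDualPairing ℝ X) x') i = 0 := this
      simp [h2]
    have := hC x'
    beta_reduce at this
    erw [Seminorm.smul_apply] at this
    rw [h0] at this
    rw [smul_zero] at this
    exact norm_le_zero_iff.mp this
  have := mem_span_of_iInf_ker_le_ker (L := fun i : s => J i) hker
  have hsub : Submodule.span ℝ (Set.range fun i : s => J i) ≤ LinearMap.range J := by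
    rw [Submodule.span_le]; rintro - ⟨i, rfl⟩; exact LinearMap.mem_range_self _ _
  obtain ⟨x₀, hx₀⟩ := hsub this
  exact ⟨x₀, fun x' => (LinearMap.congr_fun hx₀ x').symm⟩

/-- The projection of the epigraph of `wConj` is convex. -/
lemma convexC (F : X → Y → EReal) :
    Convex ℝ {z : WeakDual ℝ X × ℝ | ∃ μ : Y →L[ℝ] ℝ, wConj F z.1 μ ≤ (z.2 : EReal)} := by
  rintro z1 ⟨μ1, h1⟩ z2 ⟨μ2, h2⟩ a b ha hb hab
  refine ⟨a • μ1 + b • μ2, ?_⟩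
  unfold wConj
  apply iSup_le
  rintro p
  have t1 : (((z1.1 p.1 + μ1 p.2 : ℝ) : EReal) - F p.1 p.2) ≤ (z1.2 : EReal) := by
    refine le_trans ?_ h1
    unfold wConj
    exact le_iSup (fun q : X × Y => (((z1.1 q.1 + μ1 q.2 : ℝ) : EReal) - F q.1 q.2)) p
  have t2 : (((z2.1 p.1 + μ2 p.2 : ℝ) : EReal) - F p.1 p.2) ≤ (z2.2 : EReal) := by
    refine le_trans ?_ h2
    unfold wConj
    exact le_iSup (fun q : X × Y => (((z2.1 q.1 + μ2 q.2 : ℝ) : EReal) - F q.1 q.2)) p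
  generalize hE : F p.1 p.2 = vv at t1 t2 ⊢
  induction vv using EReal.rec with
  | bot =>
      rw [EReal.coe_sub_bot] at t1
      exact absurd t1 (by simp)
  | top =>
      rw [EReal.sub_top]
      exact bot_le
  | coe v =>
      rw [← EReal.coe_sub] at t1 t2
      have t1' : z1.1 p.1 + μ1 p.2 - v ≤ z1.2 := by exact_mod_cast t1
      have t2' : z2.1 p.1 + μ2 p.2 - v ≤ z2.2 := by exact_mod_cast t2
      rw [← EReal.coe_sub]
      have happ : ((a • z1 + b • z2).1 p.1 + (a • μ1 + b • μ2) p.2 : ℝ)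
          = a * (z1.1 p.1 + μ1 p.2) + b * (z2.1 p.1 + μ2 p.2) := by
        have e1 : (a • z1 + b • z2).1 = a • z1.1 + b • z2.1 := rfl
        rw [e1, wd_add_apply, wd_smul_apply, wd_smul_apply]
        simp [ContinuousLinearMap.add_apply, ContinuousLinearMap.smul_apply, smul_eq_mul]
        ring
      rw [happ]
      have e2 : ((a • z1 + b • z2).2 : ℝ) = a * z1.2 + b * z2.2 := by
        simp [smul_eq_mul]
      rw [e2]
      apply EReal.coe_le_coe_iff.mpr
      have hsum := add_le_add (mul_le_mul_of_nonneg_left t1' ha) (mul_le_mul_of_nonneg_left t2' hb)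
      have hv : a * v + b * v = v := by rw [← add_mul, hab, one_mul]
      nlinarith [hsum, hv]

/-- Validity of the S-procedure conclusion is membership of `(0,0)` in `C`. -/
lemma validIff (F : X → Y → EReal) :
    (∃ lam : Y →L[ℝ] ℝ, ∀ (x : X) (y : Y), 0 ≤ F x y + ((lam y : ℝ) : EReal)) ↔
      ∃ μ : Y →L[ℝ] ℝ, wConj F (0 : WeakDual ℝ X) μ ≤ ((0 : ℝ) : EReal) := by
  constructor
  · rintro ⟨lam, hlam⟩
    refine ⟨-lam, ?_⟩
    unfold wConj
    apply iSup_le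
    rintro ⟨x, y⟩
    have heq : ((0 : WeakDual ℝ X) x + (-lam) y : ℝ) = -(lam y) := by
      rw [wd_zero_apply]; simp
    rw [heq]
    exact aux1 (hlam x y)
  · rintro ⟨μ, hμ⟩
    refine ⟨-μ, fun x y => ?_⟩
    have hterm : (((0 : WeakDual ℝ X) x + μ y : ℝ) : EReal) - F x y ≤ ((0 : ℝ) : EReal) := by
      refine le_trans ?_ hμ
      unfold wConj
      exact le_iSup (fun p : X × Y =>
        (((0 : WeakDual ℝ X) p.1 + μ p.2 : ℝ) : EReal) - F p.1 p.2) (x, y)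
    have heq : ((0 : WeakDual ℝ X) x + μ y : ℝ) = μ y := by rw [wd_zero_apply]; ring
    rw [heq] at hterm
    have := aux2 hterm
    have heq2 : ((-μ) y : ℝ) = -(μ y) := by simp
    rw [heq2]
    exact this

/-- If `(0,0)` is in the closure of `C`, the biconjugate is nonnegative at `(x, 0)`. -/
lemma biconjNonneg (F : X → Y → EReal)
    (h : ((0 : WeakDual ℝ X), (0 : ℝ)) ∈
      closure {z : WeakDual ℝ X × ℝ | ∃ μ : Y →L[ℝ] ℝ, wConj F z.1 μ ≤ (z.2 : EReal)})
    (x : X) : (0 : EReal) ≤ wBiconj F x 0 := by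
  by_contra hneg
  push_neg at hneg
  obtain ⟨c, hc1, hc2⟩ := EReal.exists_between_coe_real hneg
  have hc2' : c < 0 := by exact_mod_cast hc2
  have hcont : Continuous fun z : WeakDual ℝ X × ℝ => z.1 x - z.2 :=
    ((WeakDual.eval_continuous x).comp continuous_fst).sub continuous_snd
  have hU : IsOpen {z : WeakDual ℝ X × ℝ | c < z.1 x - z.2} :=
    isOpen_lt continuous_const hcont
  have hz0 : ((0 : WeakDual ℝ X), (0 : ℝ)) ∈ {z : WeakDual ℝ X × ℝ | c < z.1 x - z.2} := by
    simp only [mem_setOf_eq, wd_zero_apply]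
    linarith
  obtain ⟨z, hzU, hzC⟩ := _root_.mem_closure_iff.mp h _ hU hz0
  obtain ⟨μ, hμ⟩ := hzC
  have hterm : (((z.1 x + μ 0 : ℝ) : EReal) - wConj F z.1 μ) ≤ wBiconj F x 0 := by
    unfold wBiconj
    exact le_iSup (fun w : WeakDual ℝ X × (Y →L[ℝ] ℝ) =>
      (((w.1 x + w.2 0 : ℝ) : EReal) - wConj F w.1 w.2)) (z.1, μ)
  have hge : ((z.1 x + μ 0 : ℝ) : EReal) - (z.2 : EReal)
      ≤ (((z.1 x + μ 0 : ℝ) : EReal) - wConj F z.1 μ) := EReal.sub_le_sub le_rfl hμ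
  have hlt : (c : EReal) < ((z.1 x + μ 0 - z.2 : ℝ) : EReal) := by
    have : c < z.1 x + μ 0 - z.2 := by
      have := hzU
      simp only [mem_setOf_eq] at this
      rw [map_zero μ]
      linarith
    exact_mod_cast this
  rw [EReal.coe_sub] at hlt
  have : (c : EReal) < (c : EReal) :=
    lt_of_lt_of_le hlt (le_trans hge (le_trans hterm hc1.le))
  exact lt_irrefl _ this

/-- Separation: if the biconjugate is nonnegative and not identically `⊤` at the slice `y = 0`,
then `(0,0)` belongs to the closure of `C`. -/
lemma memClosure (F : X → Y → EReal) (hFp : ∃ p : X × Y, F p.1 p.2 ≠ ⊤)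
    (h0 : (0 : EReal) ≤ ⨅ x : X, wBiconj F x 0) (hT : (⨅ x : X, wBiconj F x 0) ≠ ⊤) :
    ((0 : WeakDual ℝ X), (0 : ℝ)) ∈
      closure {z : WeakDual ℝ X × ℝ | ∃ μ : Y →L[ℝ] ℝ, wConj F z.1 μ ≤ (z.2 : EReal)} := by
  by_contra h
  have hconv : Convex ℝ (closure {z : WeakDual ℝ X × ℝ |
      ∃ μ : Y →L[ℝ] ℝ, wConj F z.1 μ ≤ (z.2 : EReal)}) := (convexC F).closure
  obtain ⟨f, u, hfu, hu0⟩ := geometric_hahn_banach_closed_point hconv isClosed_closure h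
  have hu : u < 0 := by
    have : f ((0 : WeakDual ℝ X), (0 : ℝ)) = 0 := by
      have : ((0 : WeakDual ℝ X), (0 : ℝ)) = (0 : WeakDual ℝ X × ℝ) := rfl
      rw [this, map_zero]
    linarith [hu0, this ▸ hu0]
  obtain ⟨x₀, hx₀⟩ := keyDual (f.comp (ContinuousLinearMap.inl ℝ (WeakDual ℝ X) ℝ))
  set r : ℝ := f ((0 : WeakDual ℝ X), (1 : ℝ)) with hrdef
  have hfsplit : ∀ z : WeakDual ℝ X × ℝ, f z = z.1 x₀ + r * z.2 := by
    intro z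
    have hzdec : z = ((z.1, (0 : ℝ)) : WeakDual ℝ X × ℝ)
        + z.2 • (((0 : WeakDual ℝ X), (1 : ℝ)) : WeakDual ℝ X × ℝ) := by
      ext
      · show z.1 = z.1 + z.2 • (0 : WeakDual ℝ X)
        simp
      · show z.2 = 0 + z.2 • (1 : ℝ)
        simp
    calc f z = f (((z.1, (0 : ℝ)) : WeakDual ℝ X × ℝ)
          + z.2 • (((0 : WeakDual ℝ X), (1 : ℝ)) : WeakDual ℝ X × ℝ)) := by rw [← hzdec]
      _ = f ((z.1, (0 : ℝ))) + z.2 * f (((0 : WeakDual ℝ X), (1 : ℝ))) := by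
          rw [map_add, map_smul]; rfl
      _ = z.1 x₀ + r * z.2 := by
          have : f ((z.1, (0 : ℝ))) = z.1 x₀ := by
            have := hx₀ z.1
            simpa using this
          rw [this, hrdef]; ring
  have hmem : ∀ (x' : WeakDual ℝ X) (μ : Y →L[ℝ] ℝ) (s : ℝ),
      wConj F x' μ ≤ (s : EReal) → x' x₀ + r * s < u := by
    intro x' μ s hs
    have hin : ((x', s) : WeakDual ℝ X × ℝ) ∈ {z : WeakDual ℝ X × ℝ |
        ∃ μ : Y →L[ℝ] ℝ, wConj F z.1 μ ≤ (z.2 : EReal)} := ⟨μ, hs⟩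
    have := hfu _ (subset_closure hin)
    rwa [hfsplit] at this
  -- C is nonempty
  have hne : ∃ (x' : WeakDual ℝ X) (μ : Y →L[ℝ] ℝ), wConj F x' μ ≠ ⊤ := by
    by_contra hall
    push_neg at hall
    have hbot : ∀ x : X, wBiconj F x 0 = ⊥ := by
      intro x
      unfold wBiconj
      have hterm : ∀ w : WeakDual ℝ X × (Y →L[ℝ] ℝ),
          (((w.1 x + w.2 0 : ℝ) : EReal) - wConj F w.1 w.2) = ⊥ := by
        intro w; rw [hall w.1 w.2, EReal.sub_top]
      simp only [hterm, iSup_bot]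
    have : (⨅ x : X, wBiconj F x 0) = ⊥ := by
      have : Nonempty X := ⟨0⟩
      simp [hbot]
    rw [this] at h0
    exact absurd h0 (by simp)
  -- wConj is never ⊥
  obtain ⟨p₀, hp₀⟩ := hFp
  have hnb : ∀ (x' : WeakDual ℝ X) (μ : Y →L[ℝ] ℝ), wConj F x' μ ≠ ⊥ := by
    intro x' μ hbot
    have hle : (((x' p₀.1 + μ p₀.2 : ℝ) : EReal) - F p₀.1 p₀.2) ≤ wConj F x' μ := by
      unfold wConj
      exact le_iSup (fun p : X × Y => (((x' p.1 + μ p.2 : ℝ) : EReal) - F p.1 p.2)) p₀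
    rw [hbot, le_bot_iff] at hle
    generalize hE : F p₀.1 p₀.2 = vv at hle hp₀
    induction vv using EReal.rec with
    | bot => rw [EReal.coe_sub_bot] at hle; exact absurd hle (by simp)
    | coe v => rw [← EReal.coe_sub] at hle; exact EReal.coe_ne_bot _ hle
    | top => exact hp₀ rfl
  -- a point with finite biconjugate
  have hxbex : ∃ xb : X, wBiconj F xb 0 ≠ ⊤ := by
    by_contra hall
    push_neg at hall
    exact hT (by simp [iInf_eq_top, hall])
  obtain ⟨xb, hxb⟩ := hxbex
  obtain ⟨M, hM⟩ := auxExistsLeCoe hxb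
  -- r ≤ 0
  obtain ⟨x'₁, μ₁, hμ₁⟩ := hne
  obtain ⟨s₁, hs₁⟩ := auxExistsLeCoe hμ₁
  have hr : r ≤ 0 := by
    by_contra hrpos
    push_neg at hrpos
    have ht : ∀ t : ℝ, 0 ≤ t → x'₁ x₀ + r * (s₁ + t) < u := by
      intro t htn
      refine hmem x'₁ μ₁ (s₁ + t) (le_trans hs₁ ?_)
      exact_mod_cast (by linarith : s₁ ≤ s₁ + t)
    set tv := max 0 ((u - x'₁ x₀ - r * s₁) / r) with htv
    have h1 := ht tv (le_max_left _ _)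
    have h2 : (u - x'₁ x₀ - r * s₁) / r ≤ tv := le_max_right _ _
    have h3 := (div_le_iff₀ hrpos).mp h2
    nlinarith
  rcases hr.lt_or_eq with hrneg | hrzero
  · -- case r < 0
    set c : ℝ := -r with hcdef
    have hc : 0 < c := by simp [hcdef]; linarith
    have hbound : ∀ (x' : WeakDual ℝ X) (μ : Y →L[ℝ] ℝ),
        wConj F x' μ = ⊤ ∨ (((x' x₀ - u) / c : ℝ) : EReal) ≤ wConj F x' μ := by
      intro x' μ
      by_cases htop : wConj F x' μ = ⊤
      · exact Or.inl htop
      · refine Or.inr ?_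
        by_contra hlt
        push_neg at hlt
        obtain ⟨s, hws, hsb⟩ := EReal.exists_between_coe_real hlt
        have hs' := hmem x' μ s hws.le
        have hsb' : s < (x' x₀ - u) / c := by exact_mod_cast hsb
        rw [lt_div_iff₀ hc] at hsb'
        have hrc : r = -c := by simp [hcdef]
        rw [hrc] at hs'
        nlinarith [hs', hsb']
    have hfinal : wBiconj F (c⁻¹ • x₀) 0 ≤ ((u / c : ℝ) : EReal) := by
      unfold wBiconj
      apply iSup_le
      rintro ⟨x', μ⟩
      rcases hbound x' μ with htop | hb
      · rw [htop, EReal.sub_top]; exact bot_le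
      · have hstep : (((x' (c⁻¹ • x₀) + μ 0 : ℝ) : EReal) - wConj F x' μ)
            ≤ ((x' (c⁻¹ • x₀) + μ 0 : ℝ) : EReal) - (((x' x₀ - u) / c : ℝ) : EReal) :=
          EReal.sub_le_sub le_rfl hb
        refine le_trans hstep ?_
        rw [← EReal.coe_sub]
        apply EReal.coe_le_coe_iff.mpr
        have hx'lin : x' (c⁻¹ • x₀) = c⁻¹ * x' x₀ := by
          rw [map_smul]; rfl
        rw [hx'lin, map_zero μ]
        have heq : c⁻¹ * x' x₀ + 0 - (x' x₀ - u) / c = u / c := by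
          field_simp
          ring
        exact le_of_eq heq
    have hge : (0 : EReal) ≤ ((u / c : ℝ) : EReal) :=
      le_trans (le_trans h0 (iInf_le _ _)) hfinal
    have hge' : (0 : ℝ) ≤ u / c := by exact_mod_cast hge
    have : u / c < 0 := div_neg_of_neg_of_pos hu hc
    linarith
  · -- case r = 0
    have hlt : ∀ (x' : WeakDual ℝ X) (μ : Y →L[ℝ] ℝ), wConj F x' μ ≠ ⊤ → x' x₀ < u := by
      intro x' μ hW
      obtain ⟨s, hs⟩ := auxExistsLeCoe hW
      have := hmem x' μ s hs
      rw [hrzero] at this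
      linarith
    have hnu : 0 < -u := by linarith
    set t : ℝ := (max M 0 + 1) / (-u) with htdef
    have hht : 0 ≤ t := by
      apply div_nonneg _ hnu.le
      have := le_max_right M 0
      linarith
    have hfinal : wBiconj F (xb + t • x₀) 0 ≤ ((M + t * u : ℝ) : EReal) := by
      unfold wBiconj
      apply iSup_le
      rintro ⟨x', μ⟩
      by_cases hW : wConj F x' μ = ⊤
      · rw [hW, EReal.sub_top]; exact bot_le
      · obtain ⟨w, hw⟩ := auxEqCoe (hnb x' μ) hW
        have h1 : (((x' xb + μ 0 : ℝ) : EReal) - wConj F x' μ) ≤ wBiconj F xb 0 := by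
          unfold wBiconj
          exact le_iSup (fun v : WeakDual ℝ X × (Y →L[ℝ] ℝ) =>
            (((v.1 xb + v.2 0 : ℝ) : EReal) - wConj F v.1 v.2)) (x', μ)
        have h1' : (((x' xb + μ 0 : ℝ) : EReal) - (w : EReal)) ≤ (M : EReal) := by
          rw [← hw]; exact le_trans h1 hM
        rw [← EReal.coe_sub] at h1'
        have h1'' : x' xb + μ 0 - w ≤ M := by exact_mod_cast h1'
        have h2 : x' x₀ < u := hlt x' μ hW
        rw [hw, ← EReal.coe_sub]
        apply EReal.coe_le_coe_iff.mpr
        have hx'lin : x' (xb + t • x₀) = x' xb + t * x' x₀ := by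
          rw [map_add, map_smul]; rfl
        rw [hx'lin]
        nlinarith [mul_le_mul_of_nonneg_left h2.le hht]
    have hge : (0 : EReal) ≤ ((M + t * u : ℝ) : EReal) :=
      le_trans (le_trans h0 (iInf_le _ _)) hfinal
    have hge' : (0 : ℝ) ≤ M + t * u := by exact_mod_cast hge
    have htu : t * u = -(max M 0 + 1) := by
      rw [htdef]
      field_simp
      rw [div_self hu.ne]
    have := le_max_left M 0
    linarith [htu ▸ hge']

end Aux

/-- Corollary 3.1 under hypothesis `(H₂)`: the `S_F`-procedure is valid iff the
projection of `epi F*` on `X* × ℝ` is weak*-closed regarding `{(0, 0)}`. -/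
theorem stmt_13 (F : X → Y → EReal)
    (H2 : (⨅ x : X, F x 0) = (⨅ x : X, wBiconj F x 0) ∧ (⨅ x : X, F x 0) ≠ ⊤) :
    ((∀ x : X, 0 ≤ F x 0) →
        ∃ lam : Y →L[ℝ] ℝ, ∀ (x : X) (y : Y), 0 ≤ F x y + ((lam y : ℝ) : EReal)) ↔
      closure {z : WeakDual ℝ X × ℝ | ∃ μ : Y →L[ℝ] ℝ, wConj F z.1 μ ≤ (z.2 : EReal)} ∩
          {((0 : WeakDual ℝ X), (0 : ℝ))} =
        {z : WeakDual ℝ X × ℝ | ∃ μ : Y →L[ℝ] ℝ, wConj F z.1 μ ≤ (z.2 : EReal)} ∩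
          {((0 : WeakDual ℝ X), (0 : ℝ))} := by
  obtain ⟨hEq, hTop⟩ := H2
  have hFp : ∃ p : X × Y, F p.1 p.2 ≠ ⊤ := by
    have : ∃ x : X, F x 0 ≠ ⊤ := by
      by_contra hall
      push_neg at hall
      exact hTop (by simp [iInf_eq_top, hall])
    obtain ⟨x, hx⟩ := this
    exact ⟨(x, 0), hx⟩
  have key : (0 : EReal) ≤ (⨅ x : X, F x 0) ↔
      ((0 : WeakDual ℝ X), (0 : ℝ)) ∈
        closure {z : WeakDual ℝ X × ℝ | ∃ μ : Y →L[ℝ] ℝ, wConj F z.1 μ ≤ (z.2 : EReal)} := by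
    constructor
    · intro h0
      exact memClosure F hFp (hEq ▸ h0) (hEq ▸ hTop)
    · intro h
      rw [hEq]
      exact le_iInf fun x => biconjNonneg F h x
  have hpos_iff : (∀ x : X, 0 ≤ F x 0) ↔ (0 : EReal) ≤ (⨅ x : X, F x 0) := by
    constructor
    · exact fun h => le_iInf h
    · exact fun h x => le_trans h (iInf_le _ _)
  constructor
  · intro hSF
    apply Set.Subset.antisymm
    · rintro z ⟨hzc, hz0⟩
      have hz : z = ((0 : WeakDual ℝ X), (0 : ℝ)) := hz0
      subst hz
      refine ⟨?_, hz0⟩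
      have h0 : (0 : EReal) ≤ (⨅ x : X, F x 0) := key.mpr hzc
      obtain ⟨lam, hlam⟩ := hSF (hpos_iff.mpr h0)
      obtain ⟨μ, hμ⟩ := (validIff F).mp ⟨lam, hlam⟩
      exact ⟨μ, hμ⟩
    · exact Set.inter_subset_inter_left _ subset_closure
  · intro hset hpos
    have h0 : (0 : EReal) ≤ (⨅ x : X, F x 0) := hpos_iff.mp hpos
    have hcl := key.mp h0
    have hmem0 : ((0 : WeakDual ℝ X), (0 : ℝ)) ∈
        {z : WeakDual ℝ X × ℝ | ∃ μ : Y →L[ℝ] ℝ, wConj F z.1 μ ≤ (z.2 : EReal)} := by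
      have : ((0 : WeakDual ℝ X), (0 : ℝ)) ∈
          {z : WeakDual ℝ X × ℝ | ∃ μ : Y →L[ℝ] ℝ, wConj F z.1 μ ≤ (z.2 : EReal)} ∩
            {((0 : WeakDual ℝ X), (0 : ℝ))} := hset ▸ ⟨hcl, rfl⟩
      exact this.1
    obtain ⟨μ, hμ⟩ := hmem0
    exact (validIff F).mpr ⟨μ, hμ⟩
end

section
/- Let X, Y be locally convex Hausdorff real topological vector spaces, U an index set, F_u : X × Y → ℝ ∪ {±∞} for u ∈ U, and h : X → ℝ ∪ {+∞} proper, convex, lower semicontinuous. If for every a' ∈ dom h* there exist ū ∈ U and μ̄ ∈ Y* with (F_ū)*(a',μ̄) ≤ h*(a'), then sup_{u∈U} F_u(x,0) ≥ h(x) for all x ∈ X. -/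
set_option linter.unusedSectionVars false


variable {X Y : Type*}
  [AddCommGroup X] [Module ℝ X] [TopologicalSpace X] [IsTopologicalAddGroup X]
  [ContinuousSMul ℝ X] [LocallyConvexSpace ℝ X] [T2Space X]
  [AddCommGroup Y] [Module ℝ Y] [TopologicalSpace Y] [IsTopologicalAddGroup Y]
  [ContinuousSMul ℝ Y] [LocallyConvexSpace ℝ Y] [T2Space Y]

/-- Fenchel conjugate of `h : X → ℝ ∪ {+∞}` on the weak* dual of `X`. -/
noncomputable def hConj (h : X → EReal) (a' : WeakDual ℝ X) : EReal :=
  ⨆ x : X, (((a' x : ℝ) : EReal) - h x)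

/-- Auxiliary: view a continuous linear functional as an element of the weak dual. -/
def stmt15.toWeak (f : X →L[ℝ] ℝ) : WeakDual ℝ X := f

@[simp] lemma stmt15.toWeak_apply (f : X →L[ℝ] ℝ) (x : X) : stmt15.toWeak f x = f x := rfl

lemma stmt15.ereal_real (v : EReal) (h1 : v ≠ ⊥) (h2 : v ≠ ⊤) : ∃ ρ : ℝ, v = (ρ : EReal) := by
  induction v using EReal.rec with
  | bot => exact absurd rfl h1
  | top => exact absurd rfl h2
  | coe r => exact ⟨r, rfl⟩

lemma stmt15.aux_sub (A : ℝ) (B C : EReal) (hC : C ≠ ⊤) (h : (A : EReal) - B ≤ C) :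
    (A : EReal) - C ≤ B := by
  induction C using EReal.rec with
  | top => exact absurd rfl hC
  | bot =>
    induction B using EReal.rec with
    | top => simp
    | bot => simp at h
    | coe b =>
      rw [← EReal.coe_sub] at h
      exact absurd (le_bot_iff.mp h) (EReal.coe_ne_bot _)
  | coe c =>
    induction B using EReal.rec with
    | top => simp
    | bot => simp at h
    | coe b =>
      rw [← EReal.coe_sub] at h ⊢
      rw [EReal.coe_le_coe_iff] at h ⊢
      linarith

lemma stmt15.hconj_le (h : X → EReal) (hbot : ∀ x, h x ≠ ⊥) (φ : X →L[ℝ] ℝ) (r : ℝ)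
    (hb : ∀ y : X, ∀ ρ : ℝ, h y = (ρ : EReal) → φ y - ρ ≤ r) :
    hConj h (stmt15.toWeak φ) ≤ (r : EReal) := by
  refine iSup_le fun y => ?_
  rcases eq_or_ne (h y) ⊤ with ht | ht
  · rw [ht, EReal.sub_top]; exact bot_le
  · obtain ⟨ρ, hρ⟩ := stmt15.ereal_real (h y) (hbot y) ht
    rw [stmt15.toWeak_apply, hρ, ← EReal.coe_sub, EReal.coe_le_coe_iff]
    exact hb y ρ hρ

lemma stmt15.aux_dec (f : (X × ℝ) →L[ℝ] ℝ) (y : X) (t : ℝ) :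
    f (y, t) = f (y, 0) + t * f (0, 1) := by
  have : ((y, t) : X × ℝ) = (y, 0) + t • ((0 : X), (1 : ℝ)) := by
    simp [Prod.ext_iff]
  rw [this, map_add, map_smul, smul_eq_mul]

lemma stmt15.aux_arith (g ρ s β : ℝ) (hβ : 0 < β) (hs : s < g + ρ * β) :
    β⁻¹ * (-g) - ρ ≤ -s / β := by
  have h4 : (β⁻¹ * (-g) - ρ) * β = -g - ρ * β := by field_simp
  have h5 : (-s / β) * β = -s := div_mul_cancel₀ _ hβ.ne'
  have h6 : (β⁻¹ * (-g) - ρ) * β ≤ (-s / β) * β := by rw [h4, h5]; linarith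
  exact le_of_mul_le_mul_right h6 hβ

lemma stmt15.aux_arith2 (g cc s β : ℝ) (hβ : 0 < β) (hs : g + cc * β < s) :
    cc < β⁻¹ * (-g) - (-s / β) := by
  have h4 : (β⁻¹ * (-g) - (-s / β)) * β = -g + s := by field_simp; ring
  have h5 : cc * β < (β⁻¹ * (-g) - (-s / β)) * β := by rw [h4]; linarith
  exact lt_of_mul_lt_mul_right (by linarith [h5]) hβ.le

lemma stmt15.aux_nonneg (h : X → EReal) (x₀ : X) (r₀ : ℝ) (hr₀ : h x₀ = (r₀ : EReal))
    (f : (X × ℝ) →L[ℝ] ℝ) (s : ℝ)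
    (hsep : ∀ y : X, ∀ t : ℝ, h y ≤ (t : EReal) → s < f (y, t)) : 0 ≤ f (0, 1) := by
  by_contra hneg
  push_neg at hneg
  obtain ⟨n, hn⟩ := exists_nat_gt ((s - f (x₀, 0) - r₀ * f (0, 1)) / f (0, 1))
  have hmem : h x₀ ≤ ((r₀ + n : ℝ) : EReal) := by
    rw [hr₀]
    exact EReal.coe_le_coe_iff.mpr (by linarith [Nat.cast_nonneg (α := ℝ) n])
  have h1 := hsep x₀ (r₀ + n) hmem
  rw [stmt15.aux_dec] at h1
  have h2 : (n : ℝ) * f (0, 1) < s - f (x₀, 0) - r₀ * f (0, 1) :=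
    (div_lt_iff_of_neg hneg).mp hn
  nlinarith [h1, h2]

open stmt15 in
/-- Lemma 4.1: `(𝔅_h) ⟹ (𝔄_h)`. -/
theorem stmt_15 {U : Type*} (F : U → X → Y → EReal) (h : X → EReal)
    (hbot : ∀ x, h x ≠ ⊥) (hproper : ∃ x, h x ≠ ⊤)
    (hconvex : Convex ℝ {p : X × ℝ | h p.1 ≤ (p.2 : EReal)})
    (hlsc : LowerSemicontinuous h)
    (hB : ∀ a' : WeakDual ℝ X, hConj h a' ≠ ⊤ →
      ∃ (u : U) (μ : Y →L[ℝ] ℝ), wConj (F u) a' μ ≤ hConj h a') :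
    ∀ x : X, h x ≤ ⨆ u : U, F u x 0 := by
  intro x
  -- Step A: affine minorants from (𝔅_h)
  have stepA : ∀ a' : WeakDual ℝ X, hConj h a' ≠ ⊤ →
      ((a' x : ℝ) : EReal) - hConj h a' ≤ ⨆ u : U, F u x 0 := by
    intro a' hne
    obtain ⟨u, μ, hle⟩ := hB a' hne
    have h1 : ((a' x : ℝ) : EReal) - F u x 0 ≤ wConj (F u) a' μ := by
      have h0 := le_iSup (fun p : X × Y => (((a' p.1 + μ p.2 : ℝ) : EReal) - F u p.1 p.2))
        ((x, 0) : X × Y)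
      simpa [wConj] using h0
    exact (aux_sub _ _ _ hne (h1.trans hle)).trans (le_iSup (fun u => F u x 0) u)
  -- epigraph is closed
  have hcl : IsClosed {p : X × ℝ | h p.1 ≤ (p.2 : EReal)} := by
    have h1 : IsClosed {p : X × EReal | h p.1 ≤ p.2} := hlsc.isClosed_epigraph
    exact h1.preimage (continuous_fst.prodMk (continuous_coe_real_ereal.comp continuous_snd))
  -- separation tool
  have hsepapp : ∀ (x1 : X) (c1 : ℝ), (c1 : EReal) < h x1 →
      ∃ (f : (X × ℝ) →L[ℝ] ℝ) (s : ℝ), f (x1, c1) < s ∧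
        ∀ (y : X) (t : ℝ), h y ≤ (t : EReal) → s < f (y, t) := by
    intro x1 c1 hc1
    have hnotmem : ((x1, c1) : X × ℝ) ∉ {p : X × ℝ | h p.1 ≤ (p.2 : EReal)} :=
      fun hmem => absurd (hmem : h x1 ≤ (c1 : EReal)) (not_le.mpr hc1)
    obtain ⟨f, s, hfs, hsep⟩ := geometric_hahn_banach_point_closed hconvex hcl hnotmem
    exact ⟨f, s, hfs, fun y t ht => hsep (y, t) ht⟩
  -- finishing step
  have finish : ∀ (c : ℝ) (φ : X →L[ℝ] ℝ) (r : ℝ),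
      (∀ (y : X) (ρ : ℝ), h y = (ρ : EReal) → φ y - ρ ≤ r) → c < φ x - r →
      (c : EReal) ≤ ⨆ u : U, F u x 0 := by
    intro c φ r hb hcx
    have hcb : hConj h (toWeak φ) ≤ (r : EReal) := hconj_le h hbot φ r hb
    have hne : hConj h (toWeak φ) ≠ ⊤ := ne_top_of_le_ne_top (EReal.coe_ne_top r) hcb
    have hchain : (c : EReal) ≤ ((toWeak φ x : ℝ) : EReal) - hConj h (toWeak φ) := by
      calc (c : EReal) ≤ ((φ x - r : ℝ) : EReal) := EReal.coe_le_coe_iff.mpr hcx.le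
        _ = ((φ x : ℝ) : EReal) - (r : EReal) := EReal.coe_sub _ _
        _ ≤ _ := EReal.sub_le_sub le_rfl hcb
    exact hchain.trans (stepA (toWeak φ) hne)
  -- the point of properness
  obtain ⟨x₀, hx₀⟩ := hproper
  obtain ⟨r₀, hr₀⟩ := ereal_real (h x₀) (hbot x₀) hx₀
  -- reduce to a real level strictly below h x
  by_contra hcon
  push_neg at hcon
  obtain ⟨c, hc1, hc2⟩ := EReal.exists_between_coe_real hcon
  refine absurd hc1 (not_lt.mpr ?_)
  -- separate (x, c) from the epigraph
  obtain ⟨f, s, hfxc, hE⟩ := hsepapp x c hc2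
  rw [aux_dec] at hfxc
  have hβnn : 0 ≤ f (0, 1) := aux_nonneg h x₀ r₀ hr₀ f s hE
  rcases hβnn.lt_or_eq with hβ | hβ
  · -- vertical component positive: direct affine minorant
    refine finish c ((f (0, 1))⁻¹ • (-(f.comp (ContinuousLinearMap.inl ℝ X ℝ)))) (-s / f (0, 1))
      ?_ ?_
    · intro y ρ hρ
      have hs := hE y ρ (le_of_eq hρ)
      rw [aux_dec] at hs
      simpa using aux_arith (f (y, 0)) ρ s (f (0, 1)) hβ hs
    · simpa using aux_arith2 (f (x, 0)) c s (f (0, 1)) hβ hfxc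
  · -- vertical component zero
    have hβ0 : f (0, 1) = 0 := hβ.symm
    have hgx : f (x, 0) < s := by rw [hβ0] at hfxc; linarith
    have hg : ∀ (y : X) (ρ : ℝ), h y = (ρ : EReal) → s < f (y, 0) := by
      intro y ρ hρ
      have hs := hE y ρ (le_of_eq hρ)
      rw [aux_dec, hβ0] at hs
      linarith
    -- second separation at (x₀, r₀ - 1) to get one affine minorant
    obtain ⟨f₀, s₀, hf₀, hE₀⟩ := hsepapp x₀ (r₀ - 1)
      (by rw [hr₀]; exact EReal.coe_lt_coe_iff.mpr (by linarith))
    rw [aux_dec] at hf₀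
    have hβ₀nn : 0 ≤ f₀ (0, 1) := aux_nonneg h x₀ r₀ hr₀ f₀ s₀ hE₀
    have hβ₀ : 0 < f₀ (0, 1) := by
      rcases hβ₀nn.lt_or_eq with hlt | heq
      · exact hlt
      · exfalso
        have h1 := hE₀ x₀ r₀ (le_of_eq hr₀)
        rw [aux_dec, ← heq] at h1
        rw [← heq] at hf₀
        linarith
    set β₀ := f₀ (0, 1) with hβ₀def
    set ψ : X → ℝ := fun y => β₀⁻¹ * (-(f₀ (y, 0))) with hψdef
    set r' : ℝ := -s₀ / β₀ with hr'def
    have hψb : ∀ (y : X) (ρ : ℝ), h y = (ρ : EReal) → ψ y - ρ ≤ r' := by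
      intro y ρ hρ
      have hs := hE₀ y ρ (le_of_eq hρ)
      rw [aux_dec] at hs
      exact aux_arith (f₀ (y, 0)) ρ s₀ β₀ hβ₀ hs
    set d : ℝ := s - f (x, 0) with hddef
    have hd : 0 < d := by simp only [hddef]; linarith
    set t : ℝ := max 0 ((c - ψ x + r' + 1) / d) with htdef
    have ht0 : 0 ≤ t := le_max_left _ _
    have htd : c - ψ x + r' + 1 ≤ t * d := by
      have := le_max_right 0 ((c - ψ x + r' + 1) / d)
      calc c - ψ x + r' + 1 = ((c - ψ x + r' + 1) / d) * d := by field_simp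
        _ ≤ t * d := mul_le_mul_of_nonneg_right (by rw [htdef]; exact le_max_right _ _) hd.le
    -- the combined functional
    refine finish c
      ((β₀⁻¹ • (-(f₀.comp (ContinuousLinearMap.inl ℝ X ℝ)))) -
        t • (f.comp (ContinuousLinearMap.inl ℝ X ℝ))) (r' - t * s) ?_ ?_
    · intro y ρ hρ
      have h1 : ψ y - ρ ≤ r' := hψb y ρ hρ
      have h2 : s < f (y, 0) := hg y ρ hρ
      have h3 : t * s ≤ t * f (y, 0) := mul_le_mul_of_nonneg_left h2.le ht0
      simp only [ContinuousLinearMap.sub_apply, ContinuousLinearMap.smul_apply,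
        ContinuousLinearMap.neg_apply, ContinuousLinearMap.comp_apply,
        ContinuousLinearMap.inl_apply, smul_eq_mul]
      simp only [hψdef] at h1
      linarith
    · have h4 : t * d = t * s - t * f (x, 0) := by rw [hddef]; ring
      simp only [ContinuousLinearMap.sub_apply, ContinuousLinearMap.smul_apply,
        ContinuousLinearMap.neg_apply, ContinuousLinearMap.comp_apply,
        ContinuousLinearMap.inl_apply, smul_eq_mul]
      simp only [hψdef] at htd
      linarith
end

section
/- Let X, Y be locally convex Hausdorff real topological vector spaces, U an index set, F_u : X × Y → ℝ ∪ {±∞}, and h : X → ℝ ∪ {+∞} proper convex lsc. Assume (H₃): for every a' ∈ dom h*, inf_{x∈X}(sup_{u} F_u(x,0) − ⟨a',x⟩) = inf_{x∈X}(sup_u (F_u)**(x,0) − ⟨a',x⟩) ≠ +∞, and (H₄): ℱ^# = {(x',s) : ∃(u,μ) ∈ U×Y*, (F_u)*(x',μ) ≤ s} is weak*-closed convex regarding gph h* = {(a',h*(a')) : a' ∈ dom h*}. Then: [∀x, sup_u F_u(x,0) ≥ h(x)] implies [∀a' ∈ dom h*, ∃(ū,μ̄) ∈ U×Y* with (F_ū)*(a',μ̄)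 ≤ h*(a')]. -/
variable {X Y : Type*}
  [AddCommGroup X] [Module ℝ X] [TopologicalSpace X] [IsTopologicalAddGroup X]
  [ContinuousSMul ℝ X] [LocallyConvexSpace ℝ X] [T2Space X]
  [AddCommGroup Y] [Module ℝ Y] [TopologicalSpace Y] [IsTopologicalAddGroup Y]
  [ContinuousSMul ℝ Y] [LocallyConvexSpace ℝ Y] [T2Space Y]

set_option linter.unusedSectionVars false
set_option linter.unusedVariables false
set_option maxHeartbeats 1000000

/-- Every continuous linear functional on the weak* dual is evaluation at a point. -/
theorem weakDual_eval (g : WeakDual ℝ X →L[ℝ] ℝ) : ∃ x : X, ∀ x' : WeakDual ℝ X, g x' = x' x := by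
  have : Nonempty X := ⟨0⟩
  obtain ⟨t, C, -, hC⟩ := Seminorm.bound_of_continuous
    ((topDualPairing ℝ X).weakBilin_withSeminorms)
    (LinearMap.toSeminorm (g : WeakDual ℝ X →ₗ[ℝ] ℝ))
    (show Continuous fun x' : WeakDual ℝ X => ‖g x'‖ from g.continuous.norm)
  let L : {y // y ∈ t} → WeakDual ℝ X →ₗ[ℝ] ℝ := fun y =>
    { toFun := fun x' => x' (y : X)
      map_add' := fun a b => rfl
      map_smul' := fun r a => rfl }
  have hker : ⨅ i, LinearMap.ker (L i) ≤ LinearMap.ker (g : WeakDual ℝ X →ₗ[ℝ] ℝ) := by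
    intro x' hx'
    simp only [Submodule.mem_iInf, LinearMap.mem_ker] at hx' ⊢
    have h0 : (t.sup (LinearMap.toSeminormFamily (topDualPairing ℝ X))) x' ≤ 0 := by
      refine Seminorm.finset_sup_apply_le le_rfl ?_
      intro y hy
      have hz : x' y = 0 := hx' ⟨y, hy⟩
      show ‖x' y‖ ≤ 0; simp [hz]
    have h1 := hC x'
    have h2 : ‖g x'‖ ≤ (C : ℝ) * (t.sup (LinearMap.toSeminormFamily (topDualPairing ℝ X))) x' := by
      exact h1
    have h3 : ‖g x'‖ ≤ 0 := by
      have : (C : ℝ) * (t.sup (LinearMap.toSeminormFamily (topDualPairing ℝ X))) x' ≤ 0 :=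
        mul_nonpos_of_nonneg_of_nonpos C.2 h0
      linarith
    simpa using le_antisymm h3 (norm_nonneg _)
  have hmem := mem_span_of_iInf_ker_le_ker (𝕜 := ℝ) hker
  obtain ⟨cf, hcf⟩ := (Submodule.mem_span_range_iff_exists_fun ℝ).1 hmem
  refine ⟨∑ i, cf i • (i : X), ?_⟩
  intro x'
  have h2 := LinearMap.congr_fun hcf x'
  simp only [LinearMap.coe_sum, Finset.sum_apply, LinearMap.smul_apply] at h2
  calc g x' = ∑ i : {y // y ∈ t}, cf i • (L i) x' := h2.symm
    _ = x' (∑ i : {y // y ∈ t}, cf i • (i : X)) := by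
        rw [map_sum]
        exact Finset.sum_congr rfl fun i _ => by rw [map_smul]; rfl

instance inst_s16 : LocallyConvexSpace ℝ (WeakDual ℝ X) :=
  WeakBilin.locallyConvexSpace (B := topDualPairing ℝ X)

theorem sep_lemma (S : Set (WeakDual ℝ X × ℝ))
    (hup : ∀ z ∈ S, ∀ t : ℝ, z.2 ≤ t → (z.1, t) ∈ S)
    (a' : WeakDual ℝ X) (s : ℝ)
    (hyp1 : ∀ x : X, ((a' x - s : ℝ) : EReal) ≤ ⨆ z ∈ S, ((z.1 x - z.2 : ℝ) : EReal))
    (hyp2 : ∃ x : X, (⨆ z ∈ S, ((z.1 x - z.2 : ℝ) : EReal)) ≠ ⊤) :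
    (a', s) ∈ closure (convexHull ℝ S) := by
  obtain ⟨z₀, hz₀⟩ : S.Nonempty := by
    rcases S.eq_empty_or_nonempty with hE | hNE
    · exfalso
      have h1 := hyp1 0
      rw [hE] at h1
      simp only [Set.mem_empty_iff_false, iSup_false, iSup_bot, le_bot_iff] at h1
      exact EReal.coe_ne_bot _ h1
    · exact hNE
  by_contra hmem
  obtain ⟨f, c, hfc, hca⟩ := geometric_hahn_banach_closed_point
    ((convex_convexHull ℝ S).closure) isClosed_closure hmem
  set c₀ : ℝ := f (0, 1) with hc₀
  obtain ⟨x₀, hx₀⟩ := weakDual_eval (f.comp (ContinuousLinearMap.inl ℝ (WeakDual ℝ X) ℝ))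
  have hfz : ∀ z : WeakDual ℝ X × ℝ, f z = z.1 x₀ + z.2 * c₀ := by
    intro z
    have hzdec : z = (z.1, (0 : ℝ)) + z.2 • ((0 : WeakDual ℝ X), (1 : ℝ)) := by
      ext
      · simp
      · simp
    conv_lhs => rw [hzdec]
    rw [map_add, map_smul, smul_eq_mul]
    congr 1
    have := hx₀ z.1
    simpa using this
  have hSm : ∀ z ∈ S, z.1 x₀ + z.2 * c₀ < c := fun z hz =>
    hfz z ▸ hfc z (subset_closure (subset_convexHull ℝ S hz))
  have hac : c < a' x₀ + s * c₀ := by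
    have := hca
    rwa [hfz] at this
  have hc₀le : c₀ ≤ 0 := by
    by_contra hpos
    push_neg at hpos
    set t : ℝ := max z₀.2 ((c - z₀.1 x₀) / c₀) with ht
    have h1 := hSm (z₀.1, t) (hup z₀ hz₀ t (le_max_left _ _))
    simp only at h1
    have h2 : (c - z₀.1 x₀) / c₀ ≤ t := le_max_right _ _
    have h3 : c - z₀.1 x₀ ≤ t * c₀ := by
      rw [div_le_iff₀ hpos] at h2
      exact h2
    linarith
  rcases hc₀le.lt_or_eq with hneg | hzero
  · -- c₀ < 0
    have hc0ne : c₀ ≠ 0 := ne_of_lt hneg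
    set l : ℝ := (-c₀)⁻¹ with hl
    have hlpos : 0 < l := inv_pos.2 (neg_pos.2 hneg)
    have hlc₀ : l * c₀ = -1 := by
      rw [hl]
      field_simp
    have hub : ∀ z ∈ S, z.1 (l • x₀) - z.2 ≤ l * c := by
      intro z hz
      have h1 := hSm z hz
      have h2 : z.1 (l • x₀) = l * z.1 x₀ := by rw [map_smul]; rfl
      have key : l * (z.1 x₀ + z.2 * c₀) = l * z.1 x₀ - z.2 := by
        rw [mul_add, show l * (z.2 * c₀) = z.2 * (l * c₀) by ring, hlc₀]; ring
      linarith [mul_lt_mul_of_pos_left h1 hlpos]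
    have hle : ((a' (l • x₀) - s : ℝ) : EReal) ≤ ((l * c : ℝ) : EReal) :=
      (hyp1 (l • x₀)).trans (iSup₂_le fun z hz => EReal.coe_le_coe_iff.2 (hub z hz))
    rw [EReal.coe_le_coe_iff] at hle
    have ha2 : a' (l • x₀) = l * a' x₀ := by rw [map_smul]; rfl
    have key2 : l * (a' x₀ + s * c₀) = l * a' x₀ - s := by
      rw [mul_add, show l * (s * c₀) = s * (l * c₀) by ring, hlc₀]; ring
    linarith [mul_lt_mul_of_pos_left hac hlpos]
  · -- c₀ = 0
    obtain ⟨xb, hxb⟩ := hyp2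
    have hQge := hyp1 xb
    have hQbot : (⨆ z ∈ S, ((z.1 xb - z.2 : ℝ) : EReal)) ≠ ⊥ := by
      intro hb
      rw [hb, le_bot_iff] at hQge
      exact EReal.coe_ne_bot _ hQge
    set M : ℝ := (⨆ z ∈ S, ((z.1 xb - z.2 : ℝ) : EReal)).toReal with hMdef
    have hM : (⨆ z ∈ S, ((z.1 xb - z.2 : ℝ) : EReal)) = (M : EReal) :=
      (EReal.coe_toReal hxb hQbot).symm
    have hMb : ∀ z ∈ S, z.1 xb - z.2 ≤ M := by
      intro z hz
      have := (le_iSup₂ (f := fun z (_ : z ∈ S) => ((z.1 xb - z.2 : ℝ) : EReal)) z hz).trans_eq hM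
      exact EReal.coe_le_coe_iff.1 this
    have hx₀c : ∀ z ∈ S, z.1 x₀ ≤ c := by
      intro z hz
      have h1 := hSm z hz
      rw [hzero, mul_zero, add_zero] at h1
      exact h1.le
    have hacc : c < a' x₀ := by rw [hzero, mul_zero, add_zero] at hac; exact hac
    set n : ℝ := max 0 ((M - a' xb + s) / (a' x₀ - c) + 1) with hn
    have hn0 : 0 ≤ n := le_max_left _ _
    have hpos : 0 < a' x₀ - c := by linarith
    have hn1 : M - a' xb + s < n * (a' x₀ - c) := by
      have h2 : (M - a' xb + s) / (a' x₀ - c) + 1 ≤ n := le_max_right _ _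
      have h3 : (M - a' xb + s) / (a' x₀ - c) ≤ n - 1 := by linarith
      rw [div_le_iff₀ hpos] at h3
      nlinarith
    have hub : ∀ z ∈ S, z.1 (n • x₀ + xb) - z.2 ≤ n * c + M := by
      intro z hz
      have h2 : z.1 (n • x₀ + xb) = n * z.1 x₀ + z.1 xb := by
        rw [map_add, map_smul]; rfl
      have h3 := hMb z hz
      have h4 := hx₀c z hz
      nlinarith
    have hfinal : ((a' (n • x₀ + xb) - s : ℝ) : EReal) ≤ ((n * c + M : ℝ) : EReal) :=
      (hyp1 (n • x₀ + xb)).trans (iSup₂_le fun z hz => EReal.coe_le_coe_iff.2 (hub z hz))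
    rw [EReal.coe_le_coe_iff] at hfinal
    have h5 : a' (n • x₀ + xb) = n * a' x₀ + a' xb := by rw [map_add, map_smul]; rfl
    nlinarith

lemma ereal_aux1 {r s : ℝ} {v P : EReal} (hv : v ≠ ⊥) (h1 : (r : EReal) - v ≤ (s : EReal))
    (h2 : v ≤ P) : ((-s : ℝ) : EReal) ≤ P - (r : EReal) := by
  induction v using EReal.rec with
  | bot => exact absurd rfl hv
  | top =>
    rw [top_le_iff.1 h2, EReal.top_sub_coe]
    exact le_top
  | coe t =>
    rw [← EReal.coe_sub, EReal.coe_le_coe_iff] at h1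
    calc ((-s : ℝ) : EReal) ≤ ((t - r : ℝ) : EReal) := EReal.coe_le_coe_iff.2 (by linarith)
      _ = (t : EReal) - (r : EReal) := EReal.coe_sub _ _
      _ ≤ P - (r : EReal) := EReal.sub_le_sub h2 le_rfl

lemma ereal_aux2 {r s : ℝ} {P : EReal} (h : ((-s : ℝ) : EReal) ≤ P - (r : EReal)) :
    ((r - s : ℝ) : EReal) ≤ P := by
  induction P using EReal.rec with
  | bot =>
    rw [EReal.bot_sub, le_bot_iff] at h
    exact absurd h (EReal.coe_ne_bot _)
  | top => exact le_top
  | coe p =>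
    rw [← EReal.coe_sub, EReal.coe_le_coe_iff] at h
    exact EReal.coe_le_coe_iff.2 (by linarith)

lemma ereal_aux3 {r : ℝ} {v : EReal} (hb : v ≠ ⊥) (ht : v ≠ ⊤) : (r : EReal) - v ≠ ⊥ := by
  induction v using EReal.rec with
  | bot => exact absurd rfl hb
  | top => exact absurd rfl ht
  | coe t => rw [← EReal.coe_sub]; exact EReal.coe_ne_bot _


/-- Theorem 4.1: under `(H₃)` and `(H₄)` the robust `S^h_{F_u}`-procedure is
valid, i.e. `(𝔄_h) ⟹ (𝔅_h)`. -/
theorem stmt_16 {U : Type*} (F : U → X → Y → EReal) (h : X → EReal)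
    (hbot : ∀ x, h x ≠ ⊥) (hproper : ∃ x, h x ≠ ⊤)
    (hconvex : Convex ℝ {p : X × ℝ | h p.1 ≤ (p.2 : EReal)})
    (hlsc : LowerSemicontinuous h)
    (H3 : ∀ a' : WeakDual ℝ X, hConj h a' ≠ ⊤ →
      (⨅ x : X, ((⨆ u : U, F u x 0) - ((a' x : ℝ) : EReal))) =
          (⨅ x : X, ((⨆ u : U, wBiconj (F u) x 0) - ((a' x : ℝ) : EReal))) ∧
        (⨅ x : X, ((⨆ u : U, F u x 0) - ((a' x : ℝ) : EReal))) ≠ ⊤)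
    (H4 : closure (convexHull ℝ
          {z : WeakDual ℝ X × ℝ | ∃ (u : U) (μ : Y →L[ℝ] ℝ),
            wConj (F u) z.1 μ ≤ (z.2 : EReal)}) ∩
          {z : WeakDual ℝ X × ℝ | hConj h z.1 = (z.2 : EReal)} =
        {z : WeakDual ℝ X × ℝ | ∃ (u : U) (μ : Y →L[ℝ] ℝ),
            wConj (F u) z.1 μ ≤ (z.2 : EReal)} ∩
          {z : WeakDual ℝ X × ℝ | hConj h z.1 = (z.2 : EReal)})
    (hA : ∀ x : X, h x ≤ ⨆ u : U, F u x 0) :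
    ∀ a' : WeakDual ℝ X, hConj h a' ≠ ⊤ →
      ∃ (u : U) (μ : Y →L[ℝ] ℝ), wConj (F u) a' μ ≤ hConj h a' := by
  intro a' ha'
  set S : Set (WeakDual ℝ X × ℝ) :=
    {z : WeakDual ℝ X × ℝ | ∃ (u : U) (μ : Y →L[ℝ] ℝ), wConj (F u) z.1 μ ≤ (z.2 : EReal)}
    with hSdef
  -- hConj h a' is a real number
  obtain ⟨x₀, hx₀⟩ := hproper
  have hbot' : hConj h a' ≠ ⊥ := by
    intro hb
    have h1 : ((a' x₀ : ℝ) : EReal) - h x₀ ≤ hConj h a' :=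
      le_iSup (fun x => ((a' x : ℝ) : EReal) - h x) x₀
    rw [hb, le_bot_iff] at h1
    exact ereal_aux3 (hbot x₀) hx₀ h1
  set s : ℝ := (hConj h a').toReal with hsdef
  have hs : hConj h a' = (s : EReal) := (EReal.coe_toReal ha' hbot').symm
  obtain ⟨heq, hne⟩ := H3 a' ha'
  -- rewrite wBiconj at y = 0
  have hwb : ∀ (u : U) (x : X), wBiconj (F u) x (0 : Y) =
      ⨆ w : WeakDual ℝ X × (Y →L[ℝ] ℝ), (((w.1 x : ℝ) : EReal) - wConj (F u) w.1 w.2) := by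
    intro u x
    simp only [wBiconj, map_zero, add_zero]
  -- pointwise key inequality
  have hxs : ∀ x : X, ((a' x : ℝ) : EReal) - h x ≤ (s : EReal) := by
    intro x
    rw [← hs]
    exact le_iSup (fun x => ((a' x : ℝ) : EReal) - h x) x
  have hlowinf : ((-s : ℝ) : EReal) ≤
      ⨅ x : X, ((⨆ u : U, wBiconj (F u) x 0) - ((a' x : ℝ) : EReal)) := by
    rw [← heq]
    exact le_iInf fun x => ereal_aux1 (hbot x) (hxs x) (hA x)
  have key : ∀ x : X, ((a' x - s : ℝ) : EReal) ≤ ⨆ u : U, wBiconj (F u) x 0 := fun x =>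
    ereal_aux2 (hlowinf.trans (iInf_le _ x))
  -- Q equality
  have hQ : ∀ x : X, (⨆ z ∈ S, ((z.1 x - z.2 : ℝ) : EReal)) = ⨆ u : U, wBiconj (F u) x 0 := by
    intro x
    apply le_antisymm
    · refine iSup₂_le ?_
      rintro ⟨x', t⟩ ⟨u, μ, hz⟩
      refine le_iSup_of_le u ?_
      rw [hwb]
      refine le_iSup_of_le (⟨x', μ⟩ : WeakDual ℝ X × (Y →L[ℝ] ℝ)) ?_
      calc ((x' x - t : ℝ) : EReal) = (x' x : EReal) - (t : EReal) := EReal.coe_sub _ _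
        _ ≤ (x' x : EReal) - wConj (F u) x' μ := EReal.sub_le_sub le_rfl hz
    · refine iSup_le fun u => ?_
      rw [hwb]
      refine iSup_le ?_
      rintro ⟨x', μ⟩
      rcases eq_or_ne (wConj (F u) x' μ) ⊤ with hC | hC
      · rw [hC, EReal.sub_top]
        exact bot_le
      rcases eq_or_ne (wConj (F u) x' μ) ⊥ with hC' | hC'
      · rw [hC', EReal.coe_sub_bot]
        rw [top_le_iff, EReal.eq_top_iff_forall_lt]
        intro M
        refine lt_of_lt_of_le ?_
          (le_iSup₂ (f := fun z (_ : z ∈ S) => ((z.1 x - z.2 : ℝ) : EReal))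
            (⟨x', x' x - M - 1⟩ : WeakDual ℝ X × ℝ) ⟨u, μ, by rw [hC']; exact bot_le⟩)
        exact EReal.coe_lt_coe_iff.2 (by simp; linarith)
      · set cr : ℝ := (wConj (F u) x' μ).toReal with hcr
        have hC2 : wConj (F u) x' μ = (cr : EReal) := (EReal.coe_toReal hC hC').symm
        have hmem : (⟨x', cr⟩ : WeakDual ℝ X × ℝ) ∈ S := ⟨u, μ, hC2.le⟩
        calc (x' x : EReal) - wConj (F u) x' μ = ((x' x - cr : ℝ) : EReal) := by
              rw [hC2, ← EReal.coe_sub]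
          _ ≤ ⨆ z ∈ S, ((z.1 x - z.2 : ℝ) : EReal) :=
              le_iSup₂ (f := fun z (_ : z ∈ S) => ((z.1 x - z.2 : ℝ) : EReal)) _ hmem
  -- hyp2
  have hne' : (⨅ x : X, ((⨆ u : U, wBiconj (F u) x 0) - ((a' x : ℝ) : EReal))) ≠ ⊤ := by
    rw [← heq]; exact hne
  obtain ⟨xb, hxb⟩ : ∃ x : X, ((⨆ u : U, wBiconj (F u) x 0) - ((a' x : ℝ) : EReal)) ≠ ⊤ := by
    by_contra hc
    push_neg at hc
    exact hne' (iInf_eq_top.2 hc)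
  have hxb' : (⨆ u : U, wBiconj (F u) xb 0) ≠ ⊤ := by
    intro ht
    rw [ht, EReal.top_sub_coe] at hxb
    exact hxb rfl
  -- upward property
  have hup : ∀ z ∈ S, ∀ t : ℝ, z.2 ≤ t → (z.1, t) ∈ S := by
    rintro z ⟨u, μ, hz⟩ t ht
    exact ⟨u, μ, hz.trans (EReal.coe_le_coe_iff.2 ht)⟩
  have hK := sep_lemma S hup a' s
    (fun x => (key x).trans_eq (hQ x).symm)
    ⟨xb, by rw [hQ xb]; exact hxb'⟩
  have hmem2 : ((a', s) : WeakDual ℝ X × ℝ) ∈ S ∩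
      {z : WeakDual ℝ X × ℝ | hConj h z.1 = (z.2 : EReal)} := by
    rw [← H4]
    exact ⟨hK, hs⟩
  obtain ⟨⟨u, μ, hu⟩, -⟩ := hmem2
  exact ⟨u, μ, hu.trans_eq hs.symm⟩
end
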